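/- arXiv:2406.03788 — 7 statements merged into one kernel-verified Lean document; each statement's English description precedes it below -/
import Mathlib

section
/- Let (G,m,c) be a finite weighted graph whose underlying graph is a connected tree (connected and containing no cycle). Then 0 is not an eigenvalue of the 1-form Laplacian Δ₁, i.e., ker Δ₁ = {0} on the space of 1-forms. -/
open Finset

noncomputable section

/-- The coboundary operator `δ`: for a 1-form `φ`,
`δφ(x) = (1/m x) Σ_{e, e⁺ = x} c(e) φ(e)`, where edges with terminal vertex `x`
are the pairs `(y, x)`. -/
def deltaOp {V : Type*} [Fintype V] (m : V → ℝ) (c : V → V → ℝ) :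
    (V → V → ℝ) →ₗ[ℝ] (V → ℝ) where
  toFun φ := fun x => (m x)⁻¹ * ∑ y, c y x * φ y x
  map_add' φ ψ := by
    funext x
    have h : ∑ y, c y x * (φ y x + ψ y x) = (∑ y, c y x * φ y x) + ∑ y, c y x * ψ y x := by
      rw [← Finset.sum_add_distrib]
      exact Finset.sum_congr rfl fun y _ => by ring
    show (m x)⁻¹ * ∑ y, c y x * (φ y x + ψ y x)
        = (m x)⁻¹ * (∑ y, c y x * φ y x) + (m x)⁻¹ * ∑ y, c y x * ψ y x
    rw [h]; ring
  map_smul' a φ := by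
    funext x
    have h : ∑ y, c y x * (a * φ y x) = a * ∑ y, c y x * φ y x := by
      rw [Finset.mul_sum]
      exact Finset.sum_congr rfl fun y _ => by ring
    show (m x)⁻¹ * ∑ y, c y x * (a * φ y x) = a * ((m x)⁻¹ * ∑ y, c y x * φ y x)
    rw [h]; ring

/-- The difference operator `d` from functions on vertices to 1-forms supported on
the edge set (the support of `c`): `df(e) = f(e⁺) - f(e⁻)` for `e` an edge, `0` otherwise. -/
def dEdge {V : Type*} (c : V → V → ℝ) : (V → ℝ) →ₗ[ℝ] (V → V → ℝ) where
  toFun f := fun x y => if c x y = 0 then 0 else f y - f x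
  map_add' f g := by
    funext x y
    by_cases h : c x y = 0
    · simp [h]
    · simp [h]; ring
  map_smul' a f := by
    funext x y
    by_cases h : c x y = 0
    · simp [h]
    · simp [h]; ring

/-- The 0-form Laplacian `Δ₀ = δ ∘ d`:
`Δ₀ f (x) = (1/m x) Σ_y c(x,y) (f x - f y)`. -/
def lap0 {V : Type*} [Fintype V] (m : V → ℝ) (c : V → V → ℝ) :
    (V → ℝ) →ₗ[ℝ] (V → ℝ) where
  toFun f := fun x => (m x)⁻¹ * ∑ y, c x y * (f x - f y)
  map_add' f g := by
    funext x
    have h : ∑ y, c x y * ((f x + g x) - (f y + g y))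
        = (∑ y, c x y * (f x - f y)) + ∑ y, c x y * (g x - g y) := by
      rw [← Finset.sum_add_distrib]
      exact Finset.sum_congr rfl fun y _ => by ring
    show (m x)⁻¹ * ∑ y, c x y * ((f x + g x) - (f y + g y))
        = (m x)⁻¹ * (∑ y, c x y * (f x - f y)) + (m x)⁻¹ * ∑ y, c x y * (g x - g y)
    rw [h]; ring
  map_smul' a f := by
    funext x
    have h : ∑ y, c x y * (a * f x - a * f y) = a * ∑ y, c x y * (f x - f y) := by
      rw [Finset.mul_sum]
      exact Finset.sum_congr rfl fun y _ => by ring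
    show (m x)⁻¹ * ∑ y, c x y * (a * f x - a * f y) = a * ((m x)⁻¹ * ∑ y, c x y * (f x - f y))
    rw [h]; ring

/-- The 1-form Laplacian `Δ₁ = d ∘ δ`. -/
def lap1 {V : Type*} [Fintype V] (m : V → ℝ) (c : V → V → ℝ) :
    (V → V → ℝ) →ₗ[ℝ] (V → V → ℝ) :=
  (dEdge c).comp (deltaOp m c)

/-- The space of 1-forms: skew-symmetric functions on ordered pairs of vertices,
supported on the edge set (the support of `c`). -/
def oneForm {V : Type*} (c : V → V → ℝ) : Submodule ℝ (V → V → ℝ) where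
  carrier := {φ | (∀ x y, φ y x = -φ x y) ∧ ∀ x y, c x y = 0 → φ x y = 0}
  add_mem' := by
    rintro φ ψ ⟨hφ1, hφ2⟩ ⟨hψ1, hψ2⟩
    refine ⟨fun x y => ?_, fun x y h => ?_⟩
    · show φ y x + ψ y x = -(φ x y + ψ x y)
      rw [hφ1 x y, hψ1 x y]; ring
    · show φ x y + ψ x y = 0
      rw [hφ2 x y h, hψ2 x y h]; ring
  zero_mem' := ⟨fun x y => by simp, fun x y _ => rfl⟩
  smul_mem' := by
    rintro a φ ⟨h1, h2⟩
    refine ⟨fun x y => ?_, fun x y h => ?_⟩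
    · show a * φ y x = -(a * φ x y)
      rw [h1 x y]; ring
    · show a * φ x y = 0
      rw [h2 x y h]; ring

lemma walk_lemma {V : Type*} (R : V → V → Prop)
    (hstep : ∀ a b, R a b → ∃ z, R b z) (a b : V) (hab : R a b) :
    ∃ v : ℕ → V, v 0 = a ∧ v 1 = b ∧ ∀ n, R (v n) (v (n+1)) :=
  let p : ℕ → {q : V × V // R q.1 q.2} := fun n =>
    Nat.rec ⟨(a,b), hab⟩ (fun _ q => ⟨(q.1.2, Classical.choose (hstep _ _ q.2)),
      Classical.choose_spec (hstep _ _ q.2)⟩) n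
  ⟨fun n => (p n).1.1, rfl, rfl, fun n => (p n).2⟩

/-- Let `(G, m, c)` be a finite weighted graph whose underlying graph is a
connected tree: connected and containing no cycle (a cycle being a nonempty chained,
cyclically closed sequence of pairwise distinct edges with `eᵢ ≠ -eⱼ` for all `i, j`).
Then `0` is not an eigenvalue of the 1-form Laplacian `Δ₁`, i.e. `ker Δ₁ = {0}` on the
space of 1-forms. -/
theorem tree_lap1_kernel_trivial
    {V : Type*} [Fintype V] (m : V → ℝ) (c : V → V → ℝ)
    (hm : ∀ x, 0 < m x) (hsym : ∀ x y, c x y = c y x)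
    (hnn : ∀ x y, 0 ≤ c x y) (hloop : ∀ x, c x x = 0)
    (hconn : ∀ x y : V, Relation.ReflTransGen (fun a b => 0 < c a b) x y)
    (htree : ¬ ∃ (ℓ : ℕ) (e : Fin (ℓ + 1) → V × V),
      (∀ i, 0 < c (e i).1 (e i).2) ∧
      (∀ i, (e i).2 = (e (i + 1)).1) ∧
      Function.Injective e ∧
      (∀ i j, e i ≠ ((e j).2, (e j).1))) :
    ∀ φ : V → V → ℝ, φ ∈ oneForm c → lap1 m c φ = 0 → φ = 0 := by
  classical
  intro φ hφ hlap
  obtain ⟨hskew, hsupp⟩ := hφ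
  by_contra hne
  -- find a starting edge with positive φ
  have hex : ∃ a b, 0 < φ a b ∧ 0 < c a b := by
    have h1 : ∃ a b, φ a b ≠ 0 := by
      by_contra h; push_neg at h
      exact hne (funext fun a => funext fun b => h a b)
    obtain ⟨a, b, hab⟩ := h1
    have hcab : c a b ≠ 0 := fun h => hab (hsupp a b h)
    have hcab' : 0 < c a b := lt_of_le_of_ne (hnn a b) (Ne.symm hcab)
    rcases lt_or_gt_of_ne hab with h | h
    · exact ⟨b, a, by rw [hskew a b]; linarith, by rw [← hsym a b]; exact hcab'⟩
    · exact ⟨a, b, h, hcab'⟩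
  obtain ⟨a₀, b₀, hφ0, hc0⟩ := hex
  set D : V → ℝ := deltaOp m c φ with hD
  have hDval : ∀ x, D x = (m x)⁻¹ * ∑ y, c y x * φ y x := fun x => rfl
  -- D is constant along edges
  have hedge : ∀ x y, 0 < c x y → D y = D x := by
    intro x y hxy
    have h0 : (if c x y = 0 then (0:ℝ) else D y - D x) = 0 := congrFun (congrFun hlap x) y
    rw [if_neg (ne_of_gt hxy)] at h0; linarith
  have hconst : ∀ x, D x = D a₀ := by
    intro x
    have h := hconn a₀ x
    induction h with
    | refl => rfl
    | tail hstep hlast ih => rw [hedge _ _ hlast, ih]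
  -- total skew sum is zero
  have hpt : ∀ x y : V, c x y * φ x y + c y x * φ y x = 0 := by
    intro x y; rw [hsym x y, hskew x y]; ring
  have hsum0 : (∑ x, ∑ y, c y x * φ y x) = 0 := by
    have h2 : (∑ x : V, ∑ y : V, (c y x * φ y x + c x y * φ x y)) = 0 :=
      Finset.sum_eq_zero fun x _ => Finset.sum_eq_zero fun y _ => hpt y x
    have h3 : (∑ x : V, ∑ y : V, (c y x * φ y x + c x y * φ x y))
        = (∑ x : V, ∑ y : V, c y x * φ y x) + (∑ x : V, ∑ y : V, c x y * φ x y) := by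
      simp [Finset.sum_add_distrib]
    have h4 : (∑ x : V, ∑ y : V, c x y * φ x y) = (∑ x : V, ∑ y : V, c y x * φ y x) :=
      Finset.sum_comm
    linarith
  -- hence D ≡ 0 and each vertex sum vanishes
  have hDzero : ∀ x, D x = 0 := by
    have hm0 : ∀ x, m x * D x = ∑ y, c y x * φ y x := by
      intro x; rw [hDval x, ← mul_assoc, mul_inv_cancel₀ (ne_of_gt (hm x)), one_mul]
    have hsm : (∑ x, m x * D x) = 0 := by rw [Finset.sum_congr rfl fun x _ => hm0 x]; exact hsum0
    have hsm2 : (∑ x, m x * D x) = (∑ x, m x) * D a₀ := by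
      rw [Finset.sum_mul]
      exact Finset.sum_congr rfl fun x _ => by rw [hconst x]
    have hmpos : 0 < ∑ x, m x := by
      have : Nonempty V := ⟨a₀⟩
      exact Finset.sum_pos (fun x _ => hm x) Finset.univ_nonempty
    have hD0 : D a₀ = 0 := by
      rw [hsm2] at hsm
      rcases mul_eq_zero.mp hsm with h | h
      · exact absurd h (ne_of_gt hmpos)
      · exact h
    intro x; rw [hconst x, hD0]
  have hzero : ∀ x, (∑ y, c y x * φ y x) = 0 := by
    intro x
    have h := hDzero x
    rw [hDval x] at h
    rcases mul_eq_zero.mp h with h | h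
    · exact absurd h (inv_ne_zero (ne_of_gt (hm x)))
    · exact h
  -- key step: walks with positive φ can be extended
  have hkey : ∀ a b, (0 < φ a b ∧ 0 < c a b) → ∃ z, 0 < φ b z ∧ 0 < c b z := by
    rintro a b ⟨hφab, hcab⟩
    by_contra h; push_neg at h
    have hterm : ∀ y, 0 ≤ c y b * φ y b := by
      intro y
      rcases eq_or_lt_of_le (hnn y b) with hc | hc
      · rw [← hc]; simp
      · have hcby : 0 < c b y := by rw [hsym b y]; exact hc
        have h1 : ¬ 0 < φ b y := fun hp => absurd hcby (not_lt.mpr (h y hp))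
        have h2 : 0 ≤ φ y b := by rw [hskew b y]; linarith [not_lt.mp h1]
        exact mul_nonneg (le_of_lt hc) h2
    have hpos : 0 < ∑ y, c y b * φ y b :=
      lt_of_lt_of_le (mul_pos hcab hφab)
        (Finset.single_le_sum (fun y _ => hterm y) (Finset.mem_univ a))
    rw [hzero b] at hpos
    exact lt_irrefl 0 hpos
  -- build the walk
  obtain ⟨v, hv0, hv1, hvR⟩ := walk_lemma (fun a b => 0 < φ a b ∧ 0 < c a b)
    hkey a₀ b₀ ⟨hφ0, hc0⟩
  -- pigeonhole: the walk repeats a vertex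
  have hP : ∃ g, ∃ s : ℕ, v s = v (s + g + 1) := by
    have hninj : ¬ Function.Injective (fun i : Fin (Fintype.card V + 1) => v i) := by
      intro hinj
      have := Fintype.card_le_of_injective _ hinj
      simp at this
    obtain ⟨i, j, heq, hne'⟩ := Function.not_injective_iff.mp hninj
    have hne'' : (i : ℕ) ≠ (j : ℕ) := fun h => hne' (Fin.ext h)
    rcases Ne.lt_or_gt hne'' with hlt | hlt
    · exact ⟨(j:ℕ) - i - 1, i, by rw [heq]; exact congrArg v (by omega)⟩
    · exact ⟨(i:ℕ) - j - 1, j, by rw [← heq]; exact congrArg v (by omega)⟩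
  set d := Nat.find hP with hd
  obtain ⟨s, hs⟩ := Nat.find_spec hP
  have hdist : ∀ k k' : ℕ, k < k' → k' ≤ d → v (s+k) ≠ v (s+k') := by
    intro k k' hkk' hk'd heq2
    exact Nat.find_min hP (m := k' - k - 1) (by omega)
      ⟨s + k, by rw [heq2]; exact congrArg v (by omega)⟩
  -- build a cycle, contradicting htree
  apply htree
  refine ⟨d, fun k => (v (s + (k:ℕ)), v (s + (k:ℕ) + 1)), fun i => (hvR (s + i)).2,
    ?_, ?_, ?_⟩
  · intro i
    show v (s + (i:ℕ) + 1) = v (s + ((i + 1 : Fin (d+1)) : ℕ))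
    by_cases hi : i = Fin.last d
    · have h1 : ((i + 1 : Fin (d+1)) : ℕ) = 0 := by
        rw [hi]; simp
      have h2 : (i : ℕ) = d := by rw [hi]; rfl
      rw [h1, h2]
      rw [Nat.add_zero]
      exact (hs.symm)
    · have h1 : ((i + 1 : Fin (d+1)) : ℕ) = (i : ℕ) + 1 := by
        rw [Fin.val_add_one, if_neg hi]
      rw [h1]
      exact congrArg v (by omega)
  · intro k k' heq3
    have h1 : v (s + (k:ℕ)) = v (s + (k':ℕ)) := congrArg Prod.fst heq3
    have hk : (k:ℕ) ≤ d := Nat.lt_succ_iff.mp k.isLt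
    have hk' : (k':ℕ) ≤ d := Nat.lt_succ_iff.mp k'.isLt
    rcases lt_trichotomy (k:ℕ) (k':ℕ) with h | h | h
    · exact absurd h1 (hdist _ _ h hk')
    · exact Fin.ext h
    · exact absurd h1.symm (hdist _ _ h hk)
  · intro i j heq3
    have h1 : v (s + (i:ℕ)) = v (s + (j:ℕ) + 1) := congrArg Prod.fst heq3
    have h2 : v (s + (i:ℕ) + 1) = v (s + (j:ℕ)) := congrArg Prod.snd heq3
    have hpi : 0 < φ (v (s + (i:ℕ))) (v (s + (i:ℕ) + 1)) := (hvR (s + i)).1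
    have hpj : 0 < φ (v (s + (j:ℕ))) (v (s + (j:ℕ) + 1)) := (hvR (s + j)).1
    rw [h1, h2] at hpi
    rw [hskew] at hpi
    linarith


end
end

section
/- Let Δ be the bounded linear operator on ℓ²(ℤ; ℂ) defined by (Δf)(n) = 2f(n) − f(n−1) − f(n+1). Then the spectrum of Δ is exactly the closed interval [0, 4]. -/
noncomputable section
set_option maxHeartbeats 1000000
set_option synthInstance.maxHeartbeats 200000
open Complex ContinuousLinearMap
open scoped ComplexConjugate ENNReal NNReal

namespace SpecAux

abbrev H := lp (fun _ : ℤ => ℂ) 2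

lemma htwo : (0:ℝ) < (2:ℝ≥0∞).toReal := by norm_num

lemma memℓp_shift (m : ℤ) (f : H) : Memℓp (fun n => (f : ℤ → ℂ) (n + m)) 2 := by
  apply memℓp_gen
  have h := (memℓp_gen_iff htwo).1 (lp.memℓp f)
  exact (Equiv.addRight m).summable_iff.2 h

def shiftL (m : ℤ) : H →ₗ[ℂ] H where
  toFun f := ⟨fun n => (f : ℤ → ℂ) (n + m), memℓp_shift m f⟩
  map_add' f g := by ext n; simp; try rfl
  map_smul' c f := by ext n; simp; try rfl

@[simp] lemma shiftL_apply (m : ℤ) (f : H) (n : ℤ) :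
    ((shiftL m f : H) : ℤ → ℂ) n = (f : ℤ → ℂ) (n + m) := rfl

lemma norm_shiftL (m : ℤ) (f : H) : ‖shiftL m f‖ = ‖f‖ := by
  have h1 := lp.norm_rpow_eq_tsum htwo (shiftL m f)
  have h2 := lp.norm_rpow_eq_tsum htwo f
  have h3 : ∑' n : ℤ, ‖(f : ℤ → ℂ) (n + m)‖ ^ (2:ℝ≥0∞).toReal
      = ∑' n : ℤ, ‖(f : ℤ → ℂ) n‖ ^ (2:ℝ≥0∞).toReal :=
    (Equiv.addRight m).tsum_eq (fun n : ℤ => ‖(f : ℤ → ℂ) n‖ ^ (2:ℝ≥0∞).toReal)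
  have := h1.trans (h3.trans h2.symm)
  have h4 : (2:ℝ≥0∞).toReal ≠ 0 := by norm_num
  exact Real.rpow_left_injOn h4 (norm_nonneg _) (norm_nonneg _) this

def S (m : ℤ) : H →L[ℂ] H :=
  LinearMap.mkContinuous (shiftL m) 1 (fun f => by simp [norm_shiftL])

@[simp] lemma S_apply (m : ℤ) (f : H) (n : ℤ) :
    ((S m f : H) : ℤ → ℂ) n = (f : ℤ → ℂ) (n + m) := rfl

lemma norm_S_le (m : ℤ) : ‖S m‖ ≤ 1 :=
  LinearMap.mkContinuous_norm_le _ zero_le_one _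







local notation "⟪" x ", " y "⟫" => @inner ℂ _ _ x y

lemma S_adjoint (m : ℤ) : adjoint (S m) = S (-m) := by
  symm
  rw [ContinuousLinearMap.eq_adjoint_iff]
  intro f g
  rw [lp.inner_eq_tsum, lp.inner_eq_tsum]
  have := (Equiv.addRight (-m)).tsum_eq
    (fun n : ℤ => (⟪(f : ℤ → ℂ) n, (g : ℤ → ℂ) (n + m)⟫ : ℂ))
  simpa [add_assoc] using this

lemma star_S (m : ℤ) : star (S m) = S (-m) := by
  rw [ContinuousLinearMap.star_eq_adjoint, S_adjoint]









instance : Nontrivial H := by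
  refine ⟨lp.single 2 (0:ℤ) (1:ℂ), 0, fun h => ?_⟩
  have := congrFun (congrArg (Subtype.val) h) 0
  simp [lp.single_apply_self] at this

variable (Δ : H →L[ℂ] H)

lemma decomp
    (hΔ : ∀ (f : lp (fun _ : ℤ => ℂ) 2) (n : ℤ),
      (Δ f : ℤ → ℂ) n = 2 * (f : ℤ → ℂ) n - (f : ℤ → ℂ) (n - 1) - (f : ℤ → ℂ) (n + 1)) :
    Δ = (2:ℂ) • (1 : H →L[ℂ] H) - S (-1) - S 1 := by
  ext f : 1
  apply lp.ext
  funext n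
  have h := hΔ f n
  rw [ContinuousLinearMap.sub_apply, ContinuousLinearMap.sub_apply,
    ContinuousLinearMap.smul_apply, ContinuousLinearMap.one_apply,
    lp.coeFn_sub, lp.coeFn_sub, Pi.sub_apply, Pi.sub_apply, lp.coeFn_smul, Pi.smul_apply,
    h, smul_eq_mul]
  simp [sub_eq_add_neg]

lemma sa
    (hΔ : ∀ (f : lp (fun _ : ℤ => ℂ) 2) (n : ℤ),
      (Δ f : ℤ → ℂ) n = 2 * (f : ℤ → ℂ) n - (f : ℤ → ℂ) (n - 1) - (f : ℤ → ℂ) (n + 1)) :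
    IsSelfAdjoint Δ := by
  rw [IsSelfAdjoint, decomp Δ hΔ]
  simp only [star_sub, star_smul, star_one, star_S, neg_neg]
  rw [show star (2:ℂ) = 2 by simp]
  abel

lemma norm_bound
    (hΔ : ∀ (f : lp (fun _ : ℤ => ℂ) 2) (n : ℤ),
      (Δ f : ℤ → ℂ) n = 2 * (f : ℤ → ℂ) n - (f : ℤ → ℂ) (n - 1) - (f : ℤ → ℂ) (n + 1)) :
    ‖Δ - algebraMap ℂ (H →L[ℂ] H) 2‖ ≤ 2 := by
  have : Δ - algebraMap ℂ (H →L[ℂ] H) 2 = -(S (-1) + S 1) := by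
    rw [decomp Δ hΔ, Algebra.algebraMap_eq_smul_one]
    abel
  rw [this, norm_neg]
  calc ‖S (-1) + S 1‖ ≤ ‖S (-1)‖ + ‖S 1‖ := norm_add_le _ _
    _ ≤ 1 + 1 := add_le_add (norm_S_le _) (norm_S_le _)
    _ = 2 := by norm_num

lemma forward
    (hΔ : ∀ (f : lp (fun _ : ℤ => ℂ) 2) (n : ℤ),
      (Δ f : ℤ → ℂ) n = 2 * (f : ℤ → ℂ) n - (f : ℤ → ℂ) (n - 1) - (f : ℤ → ℂ) (n + 1)) :
    spectrum ℂ Δ ⊆ Complex.ofReal '' Set.Icc (0 : ℝ) 4 := by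
  intro lam hlam
  have hmem : lam - 2 ∈ spectrum ℂ (Δ - algebraMap ℂ (H →L[ℂ] H) 2) := by
    rw [spectrum.mem_iff] at hlam ⊢
    convert hlam using 2
    rw [map_sub]
    abel
  have hsa : IsSelfAdjoint (Δ - algebraMap ℂ (H →L[ℂ] H) 2) := by
    refine (sa Δ hΔ).sub ?_
    exact IsSelfAdjoint.algebraMap _ (by simp)
  have hre : lam - 2 = ((lam - 2).re : ℂ) := hsa.mem_spectrum_eq_re hmem
  have hnorm : ‖lam - 2‖ ≤ 2 :=
    le_trans (spectrum.norm_le_norm_of_mem hmem) (norm_bound Δ hΔ)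
  set t : ℝ := (lam - 2).re with ht
  have habs : |t| ≤ 2 := by
    rw [hre] at hnorm
    simpa using hnorm
  refine ⟨t + 2, ⟨by linarith [(abs_le.1 habs).1], by linarith [(abs_le.1 habs).2]⟩, ?_⟩
  push_cast
  have : lam = ((t:ℂ)) + 2 := by rw [ht, ← hre]; ring
  rw [this]










variable {μ : ℝ} (hμ : μ ∈ Set.Icc (0:ℝ) 4)

/-- the angle -/
def θ (μ : ℝ) : ℝ := Real.arccos ((2 - μ)/2)

lemma cos_θ (hμ : μ ∈ Set.Icc (0:ℝ) 4) : Real.cos (θ μ) = (2 - μ)/2 := by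
  obtain ⟨h0, h4⟩ := hμ
  exact Real.cos_arccos (by linarith) (by linarith)

/-- plane wave -/
def e (μ : ℝ) (n : ℤ) : ℂ := Complex.exp ((((n : ℝ) * θ μ : ℝ)) * I)

lemma abs_e (μ : ℝ) (n : ℤ) : ‖e μ n‖ = 1 := by
  rw [e]
  exact Complex.norm_exp_ofReal_mul_I _

lemma e_succ (μ : ℝ) (n : ℤ) : e μ (n + 1) = e μ n * Complex.exp ((θ μ : ℂ) * I) := by
  rw [e, e, ← Complex.exp_add]
  congr 1
  push_cast
  ring

lemma e_pred (μ : ℝ) (n : ℤ) : e μ (n - 1) = e μ n * Complex.exp (-((θ μ : ℂ) * I)) := by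
  rw [e, e, ← Complex.exp_add]
  congr 1
  push_cast
  ring

lemma key (hμ : μ ∈ Set.Icc (0:ℝ) 4) (n : ℤ) :
    e μ (n - 1) + e μ (n + 1) = (2 - (μ:ℂ)) * e μ n := by
  rw [e_succ, e_pred]
  have h2c : (2:ℂ) * Complex.cos (θ μ) = Complex.exp ((θ μ:ℂ) * I) + Complex.exp (-((θ μ:ℂ)*I)) :=
    by have := Complex.two_cos (x := (θ μ : ℂ)); rwa [neg_mul] at this
  have hc : (Complex.cos (θ μ:ℂ)) = (((2 - μ)/2 : ℝ) : ℂ) := by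
    rw [← Complex.ofReal_cos, cos_θ hμ]
  have : Complex.exp ((θ μ:ℂ) * I) + Complex.exp (-((θ μ:ℂ)*I)) = 2 - (μ:ℂ) := by
    rw [← h2c, hc]
    push_cast
    ring
  rw [← this]
  ring

/-- truncated plane wave -/
def fN (μ : ℝ) (N : ℕ) : H :=
  ∑ n ∈ Finset.Icc (-(N:ℤ)) N, lp.single 2 n (e μ n)

lemma fN_apply (μ : ℝ) (N : ℕ) (j : ℤ) :
    ((fN μ N : H) : ℤ → ℂ) j = if j ∈ Finset.Icc (-(N:ℤ)) N then e μ j else 0 := by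
  rw [fN]
  simp only [lp.coeFn_sum, Finset.sum_apply, lp.single_apply, Finset.sum_dite_eq',
    Finset.sum_dite_eq, Pi.single_apply, Finset.sum_ite_eq, Finset.sum_ite_eq']

lemma abs_fN_le (μ : ℝ) (N : ℕ) (j : ℤ) : ‖((fN μ N : H) : ℤ → ℂ) j‖ ≤ 1 := by
  rw [fN_apply]
  split
  · rw [abs_e]
  · simp

lemma norm_fN_sq (μ : ℝ) (N : ℕ) :
    ‖fN μ N‖ ^ ((2:ℝ≥0∞).toReal) = 2 * N + 1 := by
  rw [fN, lp.norm_sum_single htwo (fun n => e μ n)]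
  have : ∀ n ∈ Finset.Icc (-(N:ℤ)) N, ‖e μ n‖ ^ ((2:ℝ≥0∞).toReal) = 1 := by
    intro n _
    rw [abs_e]
    simp
  rw [Finset.sum_congr rfl this, Finset.sum_const, Int.card_Icc]
  have : ((N:ℤ) + 1 - (-(N:ℤ))).toNat = 2 * N + 1 := by omega
  rw [this]
  ring










variable (Δ : H →L[ℂ] H)

def s4 (N : ℕ) : Finset ℤ := {-(N:ℤ)-1, -(N:ℤ), (N:ℤ), (N:ℤ)+1}

lemma g_apply {μ : ℝ}
    (hΔ : ∀ (f : lp (fun _ : ℤ => ℂ) 2) (n : ℤ),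
      (Δ f : ℤ → ℂ) n = 2 * (f : ℤ → ℂ) n - (f : ℤ → ℂ) (n - 1) - (f : ℤ → ℂ) (n + 1))
    (N : ℕ) (j : ℤ) :
    (((algebraMap ℂ (H →L[ℂ] H) (μ:ℂ) - Δ) (fN μ N) : H) : ℤ → ℂ) j
      = (μ:ℂ) * ((fN μ N : H) : ℤ → ℂ) j -
        (2 * ((fN μ N : H) : ℤ → ℂ) j - ((fN μ N : H) : ℤ → ℂ) (j - 1)
          - ((fN μ N : H) : ℤ → ℂ) (j + 1)) := by
  rw [ContinuousLinearMap.sub_apply, Algebra.algebraMap_eq_smul_one,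
    ContinuousLinearMap.smul_apply, ContinuousLinearMap.one_apply,
    lp.coeFn_sub, Pi.sub_apply, lp.coeFn_smul, Pi.smul_apply, hΔ (fN μ N) j, smul_eq_mul]

lemma g_vanish {μ : ℝ} (hμ : μ ∈ Set.Icc (0:ℝ) 4)
    (hΔ : ∀ (f : lp (fun _ : ℤ => ℂ) 2) (n : ℤ),
      (Δ f : ℤ → ℂ) n = 2 * (f : ℤ → ℂ) n - (f : ℤ → ℂ) (n - 1) - (f : ℤ → ℂ) (n + 1))
    (N : ℕ) (j : ℤ) (hj : j ∉ s4 N) :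
    (((algebraMap ℂ (H →L[ℂ] H) (μ:ℂ) - Δ) (fN μ N) : H) : ℤ → ℂ) j = 0 := by
  simp only [s4, Finset.mem_insert, Finset.mem_singleton, not_or] at hj
  obtain ⟨h1, h2, h3, h4⟩ := hj
  rw [g_apply Δ hΔ N j, fN_apply, fN_apply, fN_apply]
  by_cases hcase : j ∈ Finset.Icc (-(N:ℤ)) N
  · rw [Finset.mem_Icc] at hcase
    rw [if_pos, if_pos, if_pos]
    · linear_combination key (μ := μ) hμ j
    · rw [Finset.mem_Icc]; omega
    · rw [Finset.mem_Icc]; omega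
    · rw [Finset.mem_Icc]; omega
  · rw [Finset.mem_Icc] at hcase
    rw [if_neg, if_neg, if_neg]
    · ring
    · rw [Finset.mem_Icc]; omega
    · rw [Finset.mem_Icc]; omega
    · rw [Finset.mem_Icc]; omega

lemma g_bound {μ : ℝ} (hμ : μ ∈ Set.Icc (0:ℝ) 4)
    (hΔ : ∀ (f : lp (fun _ : ℤ => ℂ) 2) (n : ℤ),
      (Δ f : ℤ → ℂ) n = 2 * (f : ℤ → ℂ) n - (f : ℤ → ℂ) (n - 1) - (f : ℤ → ℂ) (n + 1))
    (N : ℕ) (j : ℤ) :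
    ‖(((algebraMap ℂ (H →L[ℂ] H) (μ:ℂ) - Δ) (fN μ N) : H) : ℤ → ℂ) j‖ ≤ 8 := by
  rw [g_apply Δ hΔ N j]
  have hf1 := abs_fN_le μ N j
  have hf2 := abs_fN_le μ N (j - 1)
  have hf3 := abs_fN_le μ N (j + 1)
  have hμ4 : ‖(μ:ℂ)‖ ≤ 4 := by
    rw [Complex.norm_real, Real.norm_eq_abs, _root_.abs_of_nonneg hμ.1]
    exact hμ.2
  calc ‖(μ:ℂ) * ((fN μ N : H) : ℤ → ℂ) j -
        (2 * ((fN μ N : H) : ℤ → ℂ) j - ((fN μ N : H) : ℤ → ℂ) (j - 1)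
          - ((fN μ N : H) : ℤ → ℂ) (j + 1))‖
      ≤ ‖(μ:ℂ) * ((fN μ N : H) : ℤ → ℂ) j‖ +
        ‖2 * ((fN μ N : H) : ℤ → ℂ) j - ((fN μ N : H) : ℤ → ℂ) (j - 1)
          - ((fN μ N : H) : ℤ → ℂ) (j + 1)‖ := norm_sub_le _ _
    _ ≤ ‖(μ:ℂ) * ((fN μ N : H) : ℤ → ℂ) j‖ +
        (‖2 * ((fN μ N : H) : ℤ → ℂ) j‖ + ‖((fN μ N : H) : ℤ → ℂ) (j - 1)‖
          + ‖((fN μ N : H) : ℤ → ℂ) (j + 1)‖) := by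
        gcongr
        exact le_trans (norm_sub_le _ _) (by gcongr; exact norm_sub_le _ _)
    _ ≤ 4 * 1 + (2 * 1 + 1 + 1) := by
        have e1 : ‖(μ:ℂ) * ((fN μ N : H) : ℤ → ℂ) j‖ ≤ 4 * 1 := by
          rw [norm_mul]
          exact mul_le_mul hμ4 hf1 (norm_nonneg _) (by norm_num)
        have e2 : ‖2 * ((fN μ N : H) : ℤ → ℂ) j‖ ≤ 2 * 1 := by
          rw [norm_mul, show ‖(2:ℂ)‖ = 2 by norm_num]
          exact mul_le_mul_of_nonneg_left hf1 (by norm_num)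
        linarith
    _ = 8 := by norm_num

lemma norm_g_le {μ : ℝ} (hμ : μ ∈ Set.Icc (0:ℝ) 4)
    (hΔ : ∀ (f : lp (fun _ : ℤ => ℂ) 2) (n : ℤ),
      (Δ f : ℤ → ℂ) n = 2 * (f : ℤ → ℂ) n - (f : ℤ → ℂ) (n - 1) - (f : ℤ → ℂ) (n + 1))
    (N : ℕ) :
    ‖(algebraMap ℂ (H →L[ℂ] H) (μ:ℂ) - Δ) (fN μ N)‖ ≤ 16 := by
  set g := (algebraMap ℂ (H →L[ℂ] H) (μ:ℂ) - Δ) (fN μ N) with hg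
  have hsum := lp.hasSum_norm htwo g
  have hzero : ∀ j ∉ s4 N, ‖(g : ℤ → ℂ) j‖ ^ ((2:ℝ≥0∞).toReal) = 0 := by
    intro j hj
    rw [hg, g_vanish Δ hμ hΔ N j hj]
    rw [norm_zero]
    exact Real.zero_rpow (by norm_num)
  have hsum2 : HasSum (fun j => ‖(g : ℤ → ℂ) j‖ ^ ((2:ℝ≥0∞).toReal))
      (∑ j ∈ s4 N, ‖(g : ℤ → ℂ) j‖ ^ ((2:ℝ≥0∞).toReal)) :=
    hasSum_sum_of_ne_finset_zero hzero
  have heq := hsum.unique hsum2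
  have hle : ∑ j ∈ s4 N, ‖(g : ℤ → ℂ) j‖ ^ ((2:ℝ≥0∞).toReal) ≤ ∑ j ∈ s4 N, (64:ℝ) := by
    apply Finset.sum_le_sum
    intro j _
    have hb := g_bound Δ hμ hΔ N j
    rw [show ((2:ℝ≥0∞).toReal) = ((2:ℕ):ℝ) by norm_num, Real.rpow_natCast]
    nlinarith [norm_nonneg ((g : ℤ → ℂ) j)]
  have hcard : ∑ j ∈ s4 N, (64:ℝ) ≤ 256 := by
    have c3 : ({(N:ℤ), (N:ℤ)+1} : Finset ℤ).card ≤ 2 :=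
      le_trans (Finset.card_insert_le _ _) (by simp)
    have c2 : ({-(N:ℤ), (N:ℤ), (N:ℤ)+1} : Finset ℤ).card ≤ 3 :=
      le_trans (Finset.card_insert_le _ _) (by omega)
    have c1 : (s4 N).card ≤ 4 := by
      rw [s4]; exact le_trans (Finset.card_insert_le _ _) (by omega)
    rw [Finset.sum_const, nsmul_eq_mul]
    have : ((s4 N).card : ℝ) ≤ 4 := by exact_mod_cast c1
    nlinarith
  have hfin : ‖g‖ ^ ((2:ℝ≥0∞).toReal) ≤ 256 := by
    rw [heq]; exact le_trans hle hcard
  rw [show ((2:ℝ≥0∞).toReal) = ((2:ℕ):ℝ) by norm_num, Real.rpow_natCast] at hfin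
  nlinarith [norm_nonneg g]

lemma reverse
    (hΔ : ∀ (f : lp (fun _ : ℤ => ℂ) 2) (n : ℤ),
      (Δ f : ℤ → ℂ) n = 2 * (f : ℤ → ℂ) n - (f : ℤ → ℂ) (n - 1) - (f : ℤ → ℂ) (n + 1))
    {μ : ℝ} (hμ : μ ∈ Set.Icc (0:ℝ) 4) : (μ:ℂ) ∈ spectrum ℂ Δ := by
  by_contra hcon
  rw [spectrum.notMem_iff] at hcon
  obtain ⟨u, hu⟩ := hcon
  set B : H →L[ℂ] H := (↑u⁻¹ : H →L[ℂ] H) with hB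
  have hid : ∀ x : H, B ((algebraMap ℂ (H →L[ℂ] H) (μ:ℂ) - Δ) x) = x := by
    intro x
    have h1 : (↑u⁻¹ * ↑u : H →L[ℂ] H) = 1 := u.inv_mul
    calc B ((algebraMap ℂ (H →L[ℂ] H) (μ:ℂ) - Δ) x)
        = ((↑u⁻¹ * ↑u : H →L[ℂ] H)) x := by rw [hu]; rfl
      _ = x := by rw [h1]; rfl
  have hkey : ∀ N : ℕ, ‖fN μ N‖ ≤ ‖B‖ * 16 := by
    intro N
    calc ‖fN μ N‖ = ‖B ((algebraMap ℂ (H →L[ℂ] H) (μ:ℂ) - Δ) (fN μ N))‖ := by rw [hid]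
      _ ≤ ‖B‖ * ‖(algebraMap ℂ (H →L[ℂ] H) (μ:ℂ) - Δ) (fN μ N)‖ := le_opNorm _ _
      _ ≤ ‖B‖ * 16 := by
          have := norm_g_le Δ hμ hΔ N
          exact mul_le_mul_of_nonneg_left this (norm_nonneg _)
  set c : ℝ := (‖B‖ * 16) ^ 2 with hc
  set N : ℕ := ⌈c⌉₊ with hN
  have hsq : (2 * (N:ℝ) + 1) ≤ c := by
    have h1 := norm_fN_sq μ N
    have h2 : ‖fN μ N‖ ^ ((2:ℝ≥0∞).toReal) ≤ c := by
      rw [show ((2:ℝ≥0∞).toReal) = ((2:ℕ):ℝ) by norm_num, Real.rpow_natCast, hc]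
      have := hkey N
      nlinarith [norm_nonneg (fN μ N), norm_nonneg B]
    rw [h1] at h2
    exact h2
  have hceil : c ≤ (N:ℝ) := Nat.le_ceil c
  linarith



end SpecAux
end

/-- Let `Δ` be the bounded linear operator on `ℓ²(ℤ; ℂ)` defined by
`(Δf)(n) = 2 f(n) - f(n-1) - f(n+1)` (the 0-form Laplacian of the simple graph `ℤ`
with all weights equal to `1`).  Then the spectrum of `Δ` is exactly the closed real
interval `[0, 4]`. -/
theorem spectrum_discrete_laplacian_int
    (Δ : lp (fun _ : ℤ => ℂ) 2 →L[ℂ] lp (fun _ : ℤ => ℂ) 2)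
    (hΔ : ∀ (f : lp (fun _ : ℤ => ℂ) 2) (n : ℤ),
      (Δ f : ℤ → ℂ) n = 2 * (f : ℤ → ℂ) n - (f : ℤ → ℂ) (n - 1) - (f : ℤ → ℂ) (n + 1)) :
    spectrum ℂ Δ = Complex.ofReal '' Set.Icc (0 : ℝ) 4 := by
  refine Set.Subset.antisymm (SpecAux.forward Δ hΔ) ?_
  rintro z ⟨t, ht, rfl⟩
  exact SpecAux.reverse Δ hΔ ht
end

section
/- For every finitely supported function f : ℤ → ℝ, one has (1/4) Σ_{k∈ℤ} f(k)² ≤ Σ_{k∈ℤ} (k² + 1)·(f(k−1) − f(k))². Consequently, for the weighted graph on ℤ with edges (n,n+1), vertex weight m ≡ 1 and edge weight c(n,n+1) = (n+1)²+1, the quadratic form of the 0-form Laplacian satisfies ⟨Δ₀f, f⟩ ≥ (1/4)‖f‖² for all finitely supported f, so 0 is not in the spectrum of Δ₀. -/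
/-- For every finitely supported `f : ℤ → ℝ`,
`(1/4) Σ_k f(k)² ≤ Σ_k (k² + 1)(f(k-1) - f(k))²`.  Consequently, for the weighted graph
on `ℤ` with edges `(n, n+1)`, vertex weight `m ≡ 1` and edge weight `c(n, n+1) = (n+1)² + 1`,
the quadratic form of the 0-form Laplacian satisfies `⟨Δ₀ f, f⟩ ≥ (1/4)‖f‖²` on finitely
supported functions, so `0` is not in the spectrum of `Δ₀`. -/
theorem quadratic_form_bound_G1 (f : ℤ → ℝ) (hf : (Function.support f).Finite) :
    (1 / 4) * ∑ᶠ k : ℤ, f k ^ 2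
      ≤ ∑ᶠ k : ℤ, ((k : ℝ) ^ 2 + 1) * (f (k - 1) - f k) ^ 2 := by
  classical
  set s : Finset ℤ := hf.toFinset with hs
  set N : ℤ := ((s.sup (fun k => k.natAbs) : ℕ) : ℤ) with hNdef
  have hN : ∀ k : ℤ, f k ≠ 0 → |k| ≤ N := by
    intro k hk
    have hks : k ∈ s := hf.mem_toFinset.2 hk
    have := Finset.le_sup (f := fun k : ℤ => k.natAbs) hks
    rw [Int.abs_eq_natAbs, hNdef]
    exact_mod_cast this
  set I : Finset ℤ := Finset.Icc (-(N+1)) (N+1) with hI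
  have hmem : ∀ k : ℤ, f k ≠ 0 → k ∈ I := by
    intro k hk
    have := hN k hk
    rw [abs_le] at this
    rw [hI, Finset.mem_Icc]
    omega
  have hmem' : ∀ k : ℤ, f (k - 1) ≠ 0 → k ∈ I := by
    intro k hk
    have := hN (k-1) hk
    rw [abs_le] at this
    rw [hI, Finset.mem_Icc]
    omega
  -- conversions
  have E1 : ∑ᶠ k : ℤ, f k ^ 2 = ∑ k ∈ I, f k ^ 2 := by
    apply finsum_eq_sum_of_support_subset
    intro k hk
    simp only [Function.mem_support] at hk
    exact hmem k (by intro h; exact hk (by rw [h]; ring))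
  have E2 : ∑ᶠ k : ℤ, ((k : ℝ) ^ 2 + 1) * (f (k - 1) - f k) ^ 2
      = ∑ k ∈ I, ((k : ℝ) ^ 2 + 1) * (f (k - 1) - f k) ^ 2 := by
    apply finsum_eq_sum_of_support_subset
    intro k hk
    simp only [Function.mem_support] at hk
    by_cases h1 : f (k-1) = 0
    · refine hmem k ?_
      intro h2
      exact hk (by rw [h1, h2]; ring)
    · exact hmem' k h1
  rw [E1, E2]
  set S : ℝ := ∑ k ∈ I, f k ^ 2 with hSdef
  have hS0 : 0 ≤ S := Finset.sum_nonneg fun k _ => sq_nonneg _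
  -- shift identity helper
  have shift : ∀ g : ℤ → ℝ, (∀ k, g k ≠ 0 → k ∈ I) → (∀ k, g (k+1) ≠ 0 → k ∈ I) →
      ∑ k ∈ I, g k = ∑ k ∈ I, g (k + 1) := by
    intro g hg hg'
    have h1 : ∑ k ∈ I, g k = ∑ᶠ k : ℤ, g k :=
      (finsum_eq_sum_of_support_subset g (fun k hk => hg k hk)).symm
    have h2 : ∑ᶠ k : ℤ, g k = ∑ᶠ k : ℤ, g (k + 1) :=
      (finsum_comp_equiv (Equiv.addRight (1:ℤ)) (f := g)).symm
    have h3 : ∑ᶠ k : ℤ, g (k + 1) = ∑ k ∈ I, g (k + 1) :=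
      finsum_eq_sum_of_support_subset _ (fun k hk => hg' k hk)
    rw [h1, h2, h3]
  -- ∑ f(k-1)^2 = S
  have hShift1 : ∑ k ∈ I, f (k - 1) ^ 2 = S := by
    have := shift (fun k => f (k - 1) ^ 2)
      (fun k hk => hmem' k (by simpa [pow_eq_zero_iff] using hk))
      (fun k hk => hmem k (by simpa using hk))
    simpa using this
  -- telescoping identity: ∑ k * f(k-1)^2 = ∑ (k+1) * f k ^2
  have hShift2 : ∑ k ∈ I, (k : ℝ) * f (k - 1) ^ 2 = ∑ k ∈ I, ((k : ℝ) + 1) * f k ^ 2 := by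
    have := shift (fun k => (k : ℝ) * f (k - 1) ^ 2)
      (fun k hk => by
        refine hmem' k ?_
        intro h; apply hk; simp [h])
      (fun k hk => by
        refine hmem k ?_
        intro h
        apply hk
        simp [h])
    convert this using 2 with k
    push_cast
    ring_nf
  set d : ℤ → ℝ := fun k => f (k - 1) - f k with hd
  -- identity S = ∑ (k*d k) * (f(k-1)+f k)
  have hSid : S = ∑ k ∈ I, ((k : ℝ) * d k) * (f (k - 1) + f k) := by
    have expand : ∀ k ∈ I, ((k : ℝ) * d k) * (f (k - 1) + f k)
        = (k : ℝ) * f (k - 1) ^ 2 - (k : ℝ) * f k ^ 2 := by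
      intro k _; simp only [hd]; ring
    rw [Finset.sum_congr rfl expand, Finset.sum_sub_distrib, hShift2, ← Finset.sum_sub_distrib]
    rw [hSdef]
    apply Finset.sum_congr rfl
    intro k _; ring
  -- Cauchy-Schwarz
  have hCS : S ^ 2 ≤ (∑ k ∈ I, ((k : ℝ) * d k) ^ 2) * ∑ k ∈ I, (f (k - 1) + f k) ^ 2 := by
    rw [hSid]
    exact Finset.sum_mul_sq_le_sq_mul_sq I _ _
  have hU : ∑ k ∈ I, (f (k - 1) + f k) ^ 2 ≤ 4 * S := by
    have h1 : ∑ k ∈ I, (f (k - 1) + f k) ^ 2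
        ≤ ∑ k ∈ I, (2 * f (k - 1) ^ 2 + 2 * f k ^ 2) := by
      apply Finset.sum_le_sum
      intro k _
      nlinarith [sq_nonneg (f (k-1) - f k)]
    calc ∑ k ∈ I, (f (k - 1) + f k) ^ 2
        ≤ ∑ k ∈ I, (2 * f (k - 1) ^ 2 + 2 * f k ^ 2) := h1
      _ = 2 * (∑ k ∈ I, f (k - 1) ^ 2) + 2 * S := by
          rw [Finset.sum_add_distrib, ← Finset.mul_sum, ← Finset.mul_sum, hSdef]
      _ = 4 * S := by rw [hShift1]; ring
  set T : ℝ := ∑ k ∈ I, ((k : ℝ) * d k) ^ 2 with hT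
  have hT0 : 0 ≤ T := Finset.sum_nonneg fun k _ => sq_nonneg _
  have hkey : S ^ 2 ≤ T * (4 * S) := by
    calc S ^ 2 ≤ T * ∑ k ∈ I, (f (k - 1) + f k) ^ 2 := hCS
      _ ≤ T * (4 * S) := by
          apply mul_le_mul_of_nonneg_left hU hT0
  have hfinal : (1/4) * S ≤ T := by nlinarith
  calc (1/4) * S ≤ T := hfinal
    _ ≤ ∑ k ∈ I, ((k : ℝ) ^ 2 + 1) * (f (k - 1) - f k) ^ 2 := by
        rw [hT]
        apply Finset.sum_le_sum
        intro k _
        have : ((k:ℝ) * d k) ^ 2 = (k:ℝ)^2 * (f (k-1) - f k)^2 := by rw [hd]; ring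
        rw [this]
        nlinarith [sq_nonneg (f (k-1) - f k)]
end

section
/- Consider the weighted graph on ℤ with edges (n,n+1), vertex weight m ≡ 1 and edge weight c(n,n+1) = (n+1)² + 1. Then 0 is an eigenvalue of the 1-form Laplacian Δ₁: there exists a nonzero sequence (ψ(n))_{n∈ℤ}, where ψ(n) denotes the value of a 1-form on the edge (n, n+1), such that Σ_{n∈ℤ} ((n+1)² + 1)·ψ(n)² < ∞ and ((n+1)² + 1)·ψ(n) = (n² + 1)·ψ(n−1) for all n ∈ ℤ (i.e., δψ = 0, hence Δ₁ψ = 0). Explicitly, ψ(n) = 1/((n+1)² + 1) works. -/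
lemma summable_aux : Summable fun n : ℤ => 1 / (((n : ℝ) + 1) ^ 2 + 1) := by
  have hg : Summable fun n : ℤ => 1 / ((n : ℝ) ^ 2 + 1) := by
    have hb : Summable (Function.update (fun n : ℤ => 1 / (n : ℝ) ^ 2) 0 1) :=
      (Real.summable_one_div_int_pow.mpr one_lt_two).update 0 1
    refine hb.of_nonneg_of_le (fun n => by positivity) (fun n => ?_)
    rcases eq_or_ne n 0 with rfl | hn
    · simp
    · rw [Function.update_of_ne hn]
      have h0 : (0:ℝ) < (n : ℝ) ^ 2 := by
        have : (n:ℝ) ≠ 0 := Int.cast_ne_zero.mpr hn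
        positivity
      apply one_div_le_one_div_of_le h0
      linarith
  have h := (Equiv.addRight (1:ℤ)).summable_iff.mpr hg
  refine h.congr fun n => ?_
  simp [Function.comp]

/-- For the weighted graph on `ℤ` with edges `(n, n+1)`, vertex weight
`m ≡ 1` and edge weight `c(n, n+1) = (n+1)² + 1`, `0` is an eigenvalue of the 1-form
Laplacian `Δ₁`: the sequence `ψ(n) = 1/((n+1)² + 1)` (the value of a 1-form on the edge
`(n, n+1)`) is nonzero, satisfies `Σ_n ((n+1)² + 1) ψ(n)² < ∞` (it lies in `ℓ²(E)`), and
`((n+1)² + 1) ψ(n) = (n² + 1) ψ(n-1)` for all `n ∈ ℤ` (i.e. `δψ = 0`, hence `Δ₁ψ = 0`). -/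
theorem zero_eigenvalue_lap1_G1 :
    ∃ ψ : ℤ → ℝ,
      (∀ n : ℤ, ψ n = 1 / (((n : ℝ) + 1) ^ 2 + 1)) ∧
      ψ ≠ 0 ∧
      (Summable fun n : ℤ => (((n : ℝ) + 1) ^ 2 + 1) * ψ n ^ 2) ∧
      (∀ n : ℤ, (((n : ℝ) + 1) ^ 2 + 1) * ψ n = ((n : ℝ) ^ 2 + 1) * ψ (n - 1)) := by
  set ψ : ℤ → ℝ := fun n => 1 / (((n : ℝ) + 1) ^ 2 + 1) with hψ
  have hpos : ∀ n : ℤ, (0:ℝ) < ((n : ℝ) + 1) ^ 2 + 1 := fun n => by positivity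
  refine ⟨ψ, fun n => rfl, ?_, ?_, ?_⟩
  · intro h
    have := congrFun h 0
    simp [hψ] at this
  · have : (fun n : ℤ => (((n : ℝ) + 1) ^ 2 + 1) * ψ n ^ 2) =
        fun n : ℤ => 1 / (((n : ℝ) + 1) ^ 2 + 1) := by
      funext n
      have h := (hpos n).ne'
      simp only [hψ]
      field_simp
    rw [this]
    exact summable_aux
  · intro n
    have h1 := (hpos n).ne'
    have h2 : ((n : ℝ) ^ 2 + 1) ≠ 0 := by positivity
    have : ((n : ℝ) - 1 + 1) = (n : ℝ) := by ring
    simp only [hψ, Int.cast_sub, Int.cast_one, this]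
    field_simp
end

section
/- Let c : ℤ → (0,∞), where c(n) is the weight of the edge (n, n+1) in the graph ℤ with vertex weight m ≡ 1. Suppose there exist a function A : ℤ → ℝ and a constant a > 0 such that A(n) − A(n−1) ≥ a and A(n)² = c(n) for all n ∈ ℤ. Then for every finitely supported function f : ℤ → ℝ, (a²/4) Σ_{n∈ℤ} f(n)² ≤ Σ_{n∈ℤ} c(n)·(f(n) − f(n+1))². Consequently the quadratic form of the 0-form Laplacian Δ₀ is bounded below by a²/4, so the spectrum of (the self-adjoint extension of) Δ₀ is contained in [a²/4, ∞). -/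
open Finset

private lemma shift_sum_aux (g : ℤ → ℝ) (M N : ℤ)
    (h : ∀ x ∉ Finset.Icc M N, g x = 0) :
    ∑ n ∈ Finset.Icc (M-1) N, g (n+1) = ∑ n ∈ Finset.Icc (M-1) N, g n := by
  have h1 : ∑ n ∈ Finset.Icc (M-1) N, g (n+1) = ∑ m ∈ Finset.Icc M (N+1), g m := by
    rw [show Finset.Icc M (N+1) = (Finset.Icc (M-1) N).map (addRightEmbedding 1) by
      rw [Finset.map_add_right_Icc]; congr 1; ring]
    rw [Finset.sum_map]
    rfl
  rw [h1]
  have h2 : ∑ m ∈ Finset.Icc M (N+1), g m = ∑ m ∈ Finset.Icc (M-1) (N+1), g m :=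
    Finset.sum_subset (Finset.Icc_subset_Icc (by omega) le_rfl) (by
      intro x hx hx'
      apply h
      simp only [Finset.mem_Icc] at *
      omega)
  have h3 : ∑ m ∈ Finset.Icc (M-1) N, g m = ∑ m ∈ Finset.Icc (M-1) (N+1), g m :=
    Finset.sum_subset (Finset.Icc_subset_Icc le_rfl (by omega)) (by
      intro x hx hx'
      apply h
      simp only [Finset.mem_Icc] at *
      omega)
  rw [h2, h3]

/-- Let `c : ℤ → (0, ∞)`, where `c(n)` is the weight of the edge
`(n, n+1)` in the graph `ℤ` with vertex weight `m ≡ 1`.  If there are a function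
`A : ℤ → ℝ` and a constant `a > 0` with `A(n) - A(n-1) ≥ a` and `A(n)² = c(n)` for all
`n`, then for every finitely supported `f : ℤ → ℝ`,
`(a²/4) Σ_n f(n)² ≤ Σ_n c(n)(f(n) - f(n+1))²`: the quadratic form of the 0-form Laplacian
`Δ₀` is bounded below by `a²/4`, so the spectrum of (the self-adjoint extension of) `Δ₀`
is contained in `[a²/4, ∞)`. -/
theorem quadratic_form_lower_bound_of_sqrt_weight
    (c : ℤ → ℝ) (hc : ∀ n, 0 < c n)
    (A : ℤ → ℝ) (a : ℝ) (ha : 0 < a)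
    (hA1 : ∀ n : ℤ, a ≤ A n - A (n - 1))
    (hA2 : ∀ n : ℤ, A n ^ 2 = c n) :
    ∀ f : ℤ → ℝ, (Function.support f).Finite →
      (a ^ 2 / 4) * ∑ᶠ n : ℤ, f n ^ 2 ≤ ∑ᶠ n : ℤ, c n * (f n - f (n + 1)) ^ 2 := by
  intro f hf
  obtain ⟨M, hM⟩ := hf.bddBelow
  obtain ⟨N, hN⟩ := hf.bddAbove
  have hf0 : ∀ n : ℤ, n ∉ Finset.Icc M N → f n = 0 := by
    intro n hn
    by_contra h
    exact hn (Finset.mem_Icc.2 ⟨hM h, hN h⟩)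
  set I : Finset ℤ := Finset.Icc (M-1) N with hI
  -- rewrite the finsums as finite sums over I
  have hS : ∑ᶠ n : ℤ, f n ^ 2 = ∑ n ∈ I, f n ^ 2 := by
    apply finsum_eq_finset_sum_of_support_subset
    intro n hn
    by_contra h
    have : f n = 0 := hf0 n (by
      simp only [hI, Finset.coe_Icc, Set.mem_Icc, Finset.mem_Icc] at *
      omega)
    simp [Function.mem_support, this] at hn
  have hQ : ∑ᶠ n : ℤ, c n * (f n - f (n + 1)) ^ 2
      = ∑ n ∈ I, c n * (f n - f (n + 1)) ^ 2 := by
    apply finsum_eq_finset_sum_of_support_subset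
    intro n hn
    by_contra h
    have h1 : f n = 0 := hf0 n (by
      simp only [hI, Finset.coe_Icc, Set.mem_Icc, Finset.mem_Icc] at *
      omega)
    have h2 : f (n+1) = 0 := hf0 (n+1) (by
      simp only [hI, Finset.coe_Icc, Set.mem_Icc, Finset.mem_Icc] at *
      omega)
    simp [Function.mem_support, h1, h2] at hn
  rw [hS, hQ]
  set S : ℝ := ∑ n ∈ I, f n ^ 2 with hSdef
  set Q : ℝ := ∑ n ∈ I, c n * (f n - f (n + 1)) ^ 2 with hQdef
  have hSnn : 0 ≤ S := Finset.sum_nonneg fun n _ => sq_nonneg _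
  have hQnn : 0 ≤ Q := Finset.sum_nonneg fun n _ =>
    mul_nonneg (hc n).le (sq_nonneg _)
  -- shift identities
  have hshift1 : ∑ n ∈ I, f (n+1) ^ 2 = S := by
    rw [hSdef, hI]
    exact shift_sum_aux (fun m => f m ^ 2) M N (fun x hx => by simp [hf0 x hx])
  have hshift2 : ∑ n ∈ I, A n * f (n+1) ^ 2 = ∑ n ∈ I, A (n-1) * f n ^ 2 := by
    rw [hI]
    have := shift_sum_aux (fun m => A (m-1) * f m ^ 2) M N
      (fun x hx => by simp [hf0 x hx])
    simpa using this
  -- step 1: a * S ≤ ∑ (A n - A (n-1)) f n ^ 2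
  have step1 : a * S ≤ ∑ n ∈ I, (A n - A (n-1)) * f n ^ 2 := by
    rw [hSdef, Finset.mul_sum]
    apply Finset.sum_le_sum
    intro n _
    exact mul_le_mul_of_nonneg_right (hA1 n) (sq_nonneg _)
  -- Abel summation
  have abel : ∑ n ∈ I, (A n - A (n-1)) * f n ^ 2
      = ∑ n ∈ I, (A n * (f n - f (n+1))) * (f n + f (n+1)) := by
    have e1 : ∑ n ∈ I, (A n - A (n-1)) * f n ^ 2
        = ∑ n ∈ I, A n * f n ^ 2 - ∑ n ∈ I, A (n-1) * f n ^ 2 := by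
      rw [← Finset.sum_sub_distrib]
      apply Finset.sum_congr rfl
      intro n _; ring
    have e2 : ∑ n ∈ I, (A n * (f n - f (n+1))) * (f n + f (n+1))
        = ∑ n ∈ I, A n * f n ^ 2 - ∑ n ∈ I, A n * f (n+1) ^ 2 := by
      rw [← Finset.sum_sub_distrib]
      apply Finset.sum_congr rfl
      intro n _; ring
    rw [e1, e2, hshift2]
  -- Cauchy-Schwarz
  have cs : (∑ n ∈ I, |A n * (f n - f (n+1))| * |f n + f (n+1)|) ^ 2
      ≤ (∑ n ∈ I, |A n * (f n - f (n+1))| ^ 2) * ∑ n ∈ I, |f n + f (n+1)| ^ 2 :=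
    Finset.sum_mul_sq_le_sq_mul_sq I _ _
  have hu : ∑ n ∈ I, |A n * (f n - f (n+1))| ^ 2 = Q := by
    rw [hQdef]
    apply Finset.sum_congr rfl
    intro n _
    rw [sq_abs, mul_pow, hA2 n]
  have hv : ∑ n ∈ I, |f n + f (n+1)| ^ 2 ≤ 4 * S := by
    have : ∑ n ∈ I, |f n + f (n+1)| ^ 2 ≤ ∑ n ∈ I, (2 * f n ^ 2 + 2 * f (n+1) ^ 2) := by
      apply Finset.sum_le_sum
      intro n _
      rw [sq_abs]
      nlinarith [sq_nonneg (f n - f (n+1))]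
    rw [Finset.sum_add_distrib, ← Finset.mul_sum, ← Finset.mul_sum, hshift1] at this
    linarith
  have step3 : ∑ n ∈ I, (A n * (f n - f (n+1))) * (f n + f (n+1))
      ≤ ∑ n ∈ I, |A n * (f n - f (n+1))| * |f n + f (n+1)| := by
    apply Finset.sum_le_sum
    intro n _
    calc (A n * (f n - f (n+1))) * (f n + f (n+1))
        ≤ |(A n * (f n - f (n+1))) * (f n + f (n+1))| := le_abs_self _
      _ = |A n * (f n - f (n+1))| * |f n + f (n+1)| := abs_mul _ _
  -- combine
  have key : a * S ≤ ∑ n ∈ I, |A n * (f n - f (n+1))| * |f n + f (n+1)| := by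
    rw [abel] at step1
    linarith
  have key2 : (a * S) ^ 2 ≤ Q * (4 * S) := by
    have h1 : (a * S) ^ 2 ≤ (∑ n ∈ I, |A n * (f n - f (n+1))| * |f n + f (n+1)|) ^ 2 := by
      apply pow_le_pow_left₀ (by positivity) key 2
    calc (a * S) ^ 2 ≤ _ := h1
      _ ≤ (∑ n ∈ I, |A n * (f n - f (n+1))| ^ 2) * ∑ n ∈ I, |f n + f (n+1)| ^ 2 := cs
      _ ≤ Q * (4 * S) := by
          rw [hu]
          exact mul_le_mul_of_nonneg_left hv hQnn
  rcases eq_or_lt_of_le hSnn with h | h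
  · rw [← h]; simpa using hQnn
  · nlinarith [key2, h]
end

section
/- Let α > 1 and consider the graph ℤ with vertex weight m ≡ 1 and edge weight c(n, n+1) = α^{|n|}. Then: (i) for every finitely supported f : ℤ → ℝ, ((√α − 1)²/4) Σ_{n∈ℤ} f(n)² ≤ Σ_{n∈ℤ} α^{|n|}·(f(n) − f(n+1))² (this follows by taking A(n,n+1) = α^{n/2} for n ≥ 0 and A(n,n+1) = −α^{−n/2} for n ≤ −1, which satisfies A(n,n+1) − A(n−1,n) ≥ √α − 1 and A(n,n+1)² = α^{|n|}); in particular 0 is not an eigenvalue of the 0-form Laplacian Δ₀ on ℓ²(ℤ). (ii) Σ_{n∈ℤ} α^{−|n|} < ∞, hence there is a nonzero square-summable (with weight c) solution of δψ = 0, so 0 is an eigenvalue of the 1-form Laplacian Δ₁. -/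
open Filter

/-- Let `α > 1` and consider the graph `ℤ` with vertex weight `m ≡ 1`
and edge weight `c(n, n+1) = α^{|n|}`.  Then:
(i) for every finitely supported `f : ℤ → ℝ`,
`((√α - 1)²/4) Σ_n f(n)² ≤ Σ_n α^{|n|} (f(n) - f(n+1))²`; in particular `0` is not an
eigenvalue of the 0-form Laplacian `Δ₀` on `ℓ²(ℤ)` (here
`Δ₀ f(n) = α^{|n-1|}(f(n) - f(n-1)) + α^{|n|}(f(n) - f(n+1))`);
(ii) `Σ_n α^{-|n|} < ∞`, hence there is a nonzero solution `ψ` of `δψ = 0` that is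
square-summable with weight `c`, so `0` is an eigenvalue of the 1-form Laplacian `Δ₁`. -/
theorem exponential_weights_zero_spectrum
    (α : ℝ) (hα : 1 < α) :
    -- (i) the spectral gap for `Δ₀` …
    (∀ f : ℤ → ℝ, (Function.support f).Finite →
      ((Real.sqrt α - 1) ^ 2 / 4) * ∑ᶠ n : ℤ, f n ^ 2
        ≤ ∑ᶠ n : ℤ, α ^ n.natAbs * (f n - f (n + 1)) ^ 2) ∧
    -- … and in particular `0` is not an eigenvalue of `Δ₀` on `ℓ²(ℤ)`
    (∀ f : ℤ → ℝ, (Summable fun n : ℤ => f n ^ 2) →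
      (∀ n : ℤ,
        α ^ (n - 1).natAbs * (f n - f (n - 1)) + α ^ n.natAbs * (f n - f (n + 1)) = 0) →
      f = 0) ∧
    -- (ii) `Σ 1/c < ∞` and `0` is an eigenvalue of `Δ₁`: `ker δ ≠ {0}` in `ℓ²(E)`
    (Summable fun n : ℤ => 1 / α ^ n.natAbs) ∧
    (∃ ψ : ℤ → ℝ, ψ ≠ 0 ∧
      (Summable fun n : ℤ => α ^ n.natAbs * ψ n ^ 2) ∧
      (∀ n : ℤ, α ^ (n - 1).natAbs * ψ (n - 1) = α ^ n.natAbs * ψ n)) := by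
  have hsum : Summable fun n : ℤ => 1 / α ^ n.natAbs := by
    have h0 : (0:ℝ) < α := lt_trans one_pos hα
    have hgeo : Summable fun n : ℕ => (1/α) ^ n :=
      summable_geometric_of_lt_one (by positivity) (by rw [div_lt_one h0]; exact hα)
    exact Summable.of_nat_of_neg (hgeo.congr (by intro n; simp [div_pow]))
      (hgeo.congr (by intro n; simp [div_pow]))
  refine ⟨?_, ?_, hsum, ?_⟩
  · -- part (i)
    intro f hfin
    have h0 : (0:ℝ) < α := lt_trans one_pos hα
    set s : ℝ := Real.sqrt α with hsdef
    have hs2 : s ^ 2 = α := Real.sq_sqrt h0.le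
    have hs : 1 < s := by nlinarith [Real.sqrt_nonneg α]
    have hs1 : (0:ℝ) < s - 1 := by linarith
    have hpow : ∀ k : ℕ, (1:ℝ) ≤ s ^ k := fun k => one_le_pow₀ hs.le
    set A : ℤ → ℝ := fun n => if 0 ≤ n then s ^ n.natAbs else -(s ^ n.natAbs) with hAdef
    have hA2 : ∀ n : ℤ, A n ^ 2 = α ^ n.natAbs := by
      intro n
      have h1 : A n ^ 2 = (s ^ n.natAbs) ^ 2 := by
        by_cases h : 0 ≤ n <;> simp [hAdef, h]
      rw [h1, ← pow_mul, mul_comm, pow_mul, hs2]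
    have hApos : ∀ m : ℕ, A ((m:ℕ):ℤ) = s ^ m := by
      intro m
      simp only [hAdef]
      rw [if_pos (Int.natCast_nonneg m), Int.natAbs_natCast]
    have hAneg : ∀ m : ℕ, A (-((m:ℕ):ℤ) - 1) = -(s ^ (m+1)) := by
      intro m
      simp only [hAdef]
      rw [if_neg (by omega), show (-((m:ℕ):ℤ) - 1).natAbs = m + 1 by omega]
    have hAgap : ∀ n : ℤ, s - 1 ≤ A n - A (n - 1) := by
      intro n
      obtain ⟨m, rfl | rfl⟩ := Int.eq_nat_or_neg n
      · cases m with
        | zero =>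
            have e1 := hApos 0
            have e2 := hAneg 0
            rw [show ((0:ℕ):ℤ) - 1 = -((0:ℕ):ℤ) - 1 by norm_num, e2, e1]
            norm_num; linarith
        | succ k =>
            have e1 := hApos (k+1)
            have e2 := hApos k
            rw [show ((k+1:ℕ):ℤ) - 1 = ((k:ℕ):ℤ) by push_cast; ring, e1, e2, pow_succ]
            nlinarith [hpow k]
      · cases m with
        | zero =>
            have e1 := hApos 0
            have e2 := hAneg 0
            rw [show -((0:ℕ):ℤ) = ((0:ℕ):ℤ) by norm_num, e1,
              show ((0:ℕ):ℤ) - 1 = -((0:ℕ):ℤ) - 1 by norm_num, e2]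
            norm_num; linarith
        | succ k =>
            have e1 := hAneg k
            have e2 := hAneg (k+1)
            rw [show -((k+1:ℕ):ℤ) = -((k:ℕ):ℤ) - 1 by push_cast; ring, e1,
              show -((k:ℕ):ℤ) - 1 - 1 = -((k+1:ℕ):ℤ) - 1 by push_cast; ring, e2]
            have h9 : (s-1) * 1 ≤ (s-1) * s ^ (k+1) := by
              apply mul_le_mul_of_nonneg_left (hpow _) hs1.le
            have hp : s ^ (k+1+1) = s ^ (k+1) * s := by ring
            nlinarith [h9, hp]
    -- finset setup
    set s0 : Finset ℤ := hfin.toFinset with hs0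
    set T : Finset ℤ := s0 ∪ s0.image (fun m => m - 1) with hT
    have hmem : ∀ n : ℤ, f n ≠ 0 → n ∈ s0 := by
      intro n hn; rw [hs0, Set.Finite.mem_toFinset]; exact hn
    have hmem' : ∀ n : ℤ, n ∉ s0 → f n = 0 := by
      intro n hn; by_contra h; exact hn (hmem n h)
    have hsub0 : s0 ⊆ T := Finset.subset_union_left
    -- rewrite the finsums as finset sums over T
    have hsupF : (Function.support fun n : ℤ => f n ^ 2) ⊆ ↑T := by
      intro n hn
      have : f n ≠ 0 := by
        intro h; apply hn; simp [Function.mem_support, h]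
      exact hsub0 (hmem n this)
    have hsupD : (Function.support fun n : ℤ => α ^ n.natAbs * (f n - f (n+1)) ^ 2) ⊆ ↑T := by
      intro n hn
      rw [Function.mem_support] at hn
      by_cases h1 : f n ≠ 0
      · exact hsub0 (hmem n h1)
      · push_neg at h1
        have h2 : f (n+1) ≠ 0 := by
          intro h2; apply hn; rw [h1, h2]; ring
        apply Finset.mem_coe.mpr
        rw [hT, Finset.mem_union]
        right
        exact Finset.mem_image.mpr ⟨n+1, hmem _ h2, by ring⟩
    rw [finsum_eq_finset_sum_of_support_subset _ hsupF,
      finsum_eq_finset_sum_of_support_subset _ hsupD]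
    -- shift lemma
    have hshift : ∀ B : ℤ → ℝ,
        ∑ n ∈ T, B n * f (n+1) ^ 2 = ∑ n ∈ T, B (n-1) * f n ^ 2 := by
      intro B
      have h1 : ∑ n ∈ T, B n * f (n+1) ^ 2
          = ∑ n ∈ s0.image (fun m => m - 1), B n * f (n+1) ^ 2 := by
        apply (Finset.sum_subset (by rw [hT]; exact Finset.subset_union_right) ?_).symm
        intro x _ hx
        have : f (x+1) = 0 := by
          apply hmem'
          intro hmem1
          exact hx (Finset.mem_image.mpr ⟨x+1, hmem1, by ring⟩)
        rw [this]; ring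
      have h2 : ∑ n ∈ s0.image (fun m => m - 1), B n * f (n+1) ^ 2
          = ∑ m ∈ s0, B (m-1) * f m ^ 2 := by
        rw [Finset.sum_image (by intro a _ b _ h; exact sub_left_injective h)]
        apply Finset.sum_congr rfl
        intro m _
        rw [show m - 1 + 1 = m by ring]
      have h3 : ∑ m ∈ s0, B (m-1) * f m ^ 2 = ∑ m ∈ T, B (m-1) * f m ^ 2 := by
        apply Finset.sum_subset hsub0
        intro x _ hx
        rw [hmem' x hx]; ring
      rw [h1, h2, h3]
    set S := ∑ n ∈ T, f n ^ 2 with hSdef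
    set Q := ∑ n ∈ T, α ^ n.natAbs * (f n - f (n+1)) ^ 2 with hQdef
    have hSnn : 0 ≤ S := Finset.sum_nonneg fun n _ => sq_nonneg _
    have hQnn : 0 ≤ Q := Finset.sum_nonneg fun n _ => by positivity
    set t : ℝ := (s - 1) / 4 with htdef
    have ht : 0 < t := by rw [htdef]; linarith
    -- step 1
    have step1 : (s - 1) * S ≤ ∑ n ∈ T, (A n - A (n-1)) * f n ^ 2 := by
      rw [hSdef, Finset.mul_sum]
      apply Finset.sum_le_sum
      intro n _
      exact mul_le_mul_of_nonneg_right (hAgap n) (sq_nonneg _)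
    -- step 2 : telescoping via shift
    have step2 : ∑ n ∈ T, (A n - A (n-1)) * f n ^ 2
        = ∑ n ∈ T, (A n * f n ^ 2 - A n * f (n+1) ^ 2) := by
      have e : ∑ n ∈ T, (A n - A (n-1)) * f n ^ 2
          = ∑ n ∈ T, A n * f n ^ 2 - ∑ n ∈ T, A (n-1) * f n ^ 2 := by
        rw [← Finset.sum_sub_distrib]
        apply Finset.sum_congr rfl
        intro n _
        ring
      rw [e, ← hshift A, ← Finset.sum_sub_distrib]
    -- step 3 : AM-GM pointwise
    have step3 : ∑ n ∈ T, (A n * f n ^ 2 - A n * f (n+1) ^ 2)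
        ≤ Q / (2*t) + t/2 * ∑ n ∈ T, (f n + f (n+1)) ^ 2 := by
      rw [hQdef, Finset.sum_div, Finset.mul_sum, ← Finset.sum_add_distrib]
      apply Finset.sum_le_sum
      intro n _
      have amgm : ∀ a b : ℝ, a * b ≤ a^2 / (2*t) + t/2 * b^2 := by
        intro a b
        rw [div_add' _ _ _ (by positivity), le_div_iff₀ (by positivity)]
        nlinarith [sq_nonneg (a - t * b), ht]
      have h4 := amgm (A n * (f n - f (n+1))) (f n + f (n+1))
      have h5 : (A n * (f n - f (n+1)))^2 = α ^ n.natAbs * (f n - f (n+1)) ^ 2 := by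
        rw [mul_pow, hA2]
      rw [h5] at h4
      calc A n * f n ^ 2 - A n * f (n+1) ^ 2
          = (A n * (f n - f (n+1))) * (f n + f (n+1)) := by ring
        _ ≤ _ := h4
    -- step 4 : the cross sum
    have step4 : ∑ n ∈ T, (f n + f (n+1)) ^ 2 ≤ 4 * S := by
      have h6 : ∑ n ∈ T, (f n + f (n+1)) ^ 2 ≤ ∑ n ∈ T, (2 * f n ^ 2 + 2 * f (n+1) ^ 2) := by
        apply Finset.sum_le_sum
        intro n _
        nlinarith [sq_nonneg (f n - f (n+1))]
      have h7 : ∑ n ∈ T, ((1:ℝ) * f (n+1) ^ 2) = ∑ n ∈ T, (1:ℝ) * f n ^ 2 := hshift (fun _ => 1)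
      simp only [one_mul] at h7
      calc ∑ n ∈ T, (f n + f (n+1)) ^ 2 ≤ ∑ n ∈ T, (2 * f n ^ 2 + 2 * f (n+1) ^ 2) := h6
        _ = 2 * S + 2 * ∑ n ∈ T, f (n+1) ^ 2 := by
            rw [Finset.sum_add_distrib, hSdef, ← Finset.mul_sum, ← Finset.mul_sum]
        _ = 4 * S := by rw [h7, hSdef]; ring
    -- combine
    have main : (s - 1) * S ≤ Q / (2*t) + t/2 * (4 * S) := by
      calc (s - 1) * S ≤ ∑ n ∈ T, (A n - A (n-1)) * f n ^ 2 := step1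
        _ = _ := step2
        _ ≤ Q / (2*t) + t/2 * ∑ n ∈ T, (f n + f (n+1)) ^ 2 := step3
        _ ≤ Q / (2*t) + t/2 * (4 * S) := by
            have := mul_le_mul_of_nonneg_left step4 (le_of_lt (by positivity : (0:ℝ) < t/2))
            linarith
    -- final algebra
    have hne : s - 1 ≠ 0 := hs1.ne'
    have e : (s-1) * (Q / (2*t) + t/2 * (4*S)) = 2*Q + (s-1)^2/2 * S := by
      rw [htdef]
      field_simp
      ring
    have main2 := mul_le_mul_of_nonneg_left main hs1.le
    rw [e] at main2
    show (s - 1)^2 / 4 * S ≤ Q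
    nlinarith [main2]
  · -- part (ii): no zero eigenvalue
    intro f hf heq
    have h0 : (0:ℝ) < α := lt_trans one_pos hα
    set r : ℝ := 1/α with hr
    have hr0 : (0:ℝ) ≤ r := by positivity
    have hr1 : r < 1 := by rw [hr, div_lt_one h0]; exact hα
    have key : ∀ k : ℕ, α ^ k * r ^ k = 1 := by
      intro k; rw [hr, div_pow, one_pow, mul_one_div, div_self (pow_ne_zero _ h0.ne')]
    set g : ℤ → ℝ := fun n => α ^ n.natAbs * (f (n+1) - f n) with hg
    have hgstep : ∀ n : ℤ, g (n - 1) = g n := by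
      intro n
      have h1 := heq n
      have h2 : (n - 1) + 1 = n := by ring
      simp only [hg, h2]
      linarith
    have hgconst : ∀ n : ℤ, g n = g 0 := by
      intro n
      induction n using Int.induction_on with
      | zero => rfl
      | succ k ih => rw [← ih, ← hgstep (k+1)]; norm_num
      | pred k ih =>
          rw [← ih]
          exact hgstep (-(k:ℤ))
    set C := g 0 with hC
    have hstep : ∀ n : ℤ, f (n+1) = f n + C * r ^ n.natAbs := by
      intro n
      have h1 : α ^ n.natAbs * (f (n+1) - f n) = C := hgconst n
      calc f (n+1) = f n + (f (n+1) - f n) * (α ^ n.natAbs * r ^ n.natAbs) := by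
            rw [key]; ring
        _ = f n + C * r ^ n.natAbs := by rw [← h1]; ring
    have hup : ∀ N : ℕ, f (N:ℤ) = f 0 + C * ∑ k ∈ Finset.range N, r ^ k := by
      intro N
      induction N with
      | zero => simp
      | succ k ih =>
          have := hstep (k:ℤ)
          rw [show ((k+1:ℕ):ℤ) = (k:ℤ)+1 by push_cast; ring, this, ih,
            Finset.sum_range_succ]
          simp [Int.natAbs_natCast]
          ring
    have hdown : ∀ N : ℕ, f (-(N:ℤ)) = f 0 - C * r * ∑ k ∈ Finset.range N, r ^ k := by
      intro N
      induction N with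
      | zero => simp
      | succ k ih =>
          have h4 := hstep (-((k:ℤ)+1))
          rw [show -((k:ℤ)+1) + 1 = -(k:ℤ) by ring] at h4
          have h5 : (-((k:ℤ)+1)).natAbs = k+1 := by
            rw [show -((k:ℤ)+1) = -((k+1:ℕ):ℤ) by push_cast; ring, Int.natAbs_neg,
              Int.natAbs_natCast]
          rw [h5] at h4
          rw [show -((k+1:ℕ):ℤ) = -((k:ℤ)+1) by push_cast; ring]
          have : f (-((k:ℤ)+1)) = f (-(k:ℤ)) - C * r ^ (k+1) := by linarith
          rw [this, ih, Finset.sum_range_succ]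
          ring
    -- f tends to 0 at ±∞
    have hsq := hf.tendsto_cofinite_zero
    have hf0 : Tendsto f cofinite (nhds 0) := by
      rw [tendsto_zero_iff_abs_tendsto_zero]
      have h6 : Tendsto (fun n : ℤ => Real.sqrt (f n ^ 2)) cofinite (nhds (Real.sqrt 0)) :=
        (Real.continuous_sqrt.tendsto 0).comp hsq
      rw [Real.sqrt_zero] at h6
      exact h6.congr (fun n => by simp [Real.sqrt_sq_eq_abs])
    have hcastT : Tendsto (fun N : ℕ => (N:ℤ)) atTop cofinite := by
      rw [← Nat.cofinite_eq_atTop]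
      exact (Nat.cast_injective : Function.Injective ((↑) : ℕ → ℤ)).tendsto_cofinite
    have hcastB : Tendsto (fun N : ℕ => -(N:ℤ)) atTop cofinite := by
      rw [← Nat.cofinite_eq_atTop]
      have hinj : Function.Injective (fun N : ℕ => -(N:ℤ)) :=
        fun a b h => Nat.cast_injective (neg_injective h)
      exact hinj.tendsto_cofinite
    have hgeom : Tendsto (fun N => ∑ k ∈ Finset.range N, r ^ k) atTop (nhds (1-r)⁻¹) :=
      (hasSum_geometric_of_lt_one hr0 hr1).tendsto_sum_nat
    have hlimT : f 0 + C * (1-r)⁻¹ = 0 := by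
      have t1 : Tendsto (fun N : ℕ => f (N:ℤ)) atTop (nhds 0) := hf0.comp hcastT
      have t2 : Tendsto (fun N : ℕ => f 0 + C * ∑ k ∈ Finset.range N, r ^ k) atTop
          (nhds (f 0 + C * (1-r)⁻¹)) := tendsto_const_nhds.add (tendsto_const_nhds.mul hgeom)
      exact tendsto_nhds_unique (t2.congr (fun N => (hup N).symm)) t1
    have hlimB : f 0 - C * r * (1-r)⁻¹ = 0 := by
      have t1 : Tendsto (fun N : ℕ => f (-(N:ℤ))) atTop (nhds 0) := hf0.comp hcastB
      have t2 : Tendsto (fun N : ℕ => f 0 - C * r * ∑ k ∈ Finset.range N, r ^ k) atTop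
          (nhds (f 0 - C * r * (1-r)⁻¹)) :=
        tendsto_const_nhds.sub (tendsto_const_nhds.mul hgeom)
      exact tendsto_nhds_unique (t2.congr (fun N => (hdown N).symm)) t1
    have hS : (0:ℝ) < (1-r)⁻¹ := by
      apply inv_pos.mpr; linarith
    have hC0 : C = 0 := by
      have : C * (1 + r) * (1-r)⁻¹ = 0 := by linarith
      have h7 : (0:ℝ) < 1 + r := by linarith
      rcases mul_eq_zero.mp this with h | h
      · rcases mul_eq_zero.mp h with h' | h'
        · exact h'
        · linarith
      · linarith [hS.ne' h]
    have hf00 : f 0 = 0 := by rw [hC0] at hlimT; linarith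
    funext n
    show f n = 0
    have hconst : ∀ n : ℤ, f n = f 0 := by
      intro m
      induction m using Int.induction_on with
      | zero => rfl
      | succ k ih => rw [hstep (k:ℤ), hC0, ih]; ring
      | pred k ih =>
          have h8 := hstep (-(k:ℤ)-1)
          rw [show -(k:ℤ) - 1 + 1 = -(k:ℤ) by ring, hC0] at h8
          simp only [zero_mul, add_zero] at h8
          linarith [ih]
    rw [hconst n, hf00]
  · -- part (iv)
    have h0 : (0:ℝ) < α := lt_trans one_pos hα
    have hsum : Summable fun n : ℤ => 1 / α ^ n.natAbs := by
      have hgeo : Summable fun n : ℕ => (1/α) ^ n :=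
        summable_geometric_of_lt_one (by positivity) (by rw [div_lt_one h0]; exact hα)
      exact Summable.of_nat_of_neg (hgeo.congr (by intro n; simp [div_pow]))
        (hgeo.congr (by intro n; simp [div_pow]))
    have key : ∀ k : ℕ, α ^ k * (1/α)^k = 1 := by
      intro k; rw [div_pow, one_pow, mul_one_div, div_self (pow_ne_zero _ h0.ne')]
    refine ⟨fun n => (1/α) ^ n.natAbs, ?_, ?_, ?_⟩
    · intro h
      have := congrFun h 0
      simp at this

    · apply hsum.congr
      intro n
      have : α ^ n.natAbs * ((1/α) ^ n.natAbs) ^ 2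
          = (α ^ n.natAbs * (1/α)^n.natAbs) * (1/α)^n.natAbs := by ring
      rw [this, key, one_mul, div_pow, one_pow, one_div]
    · intro n; rw [key, key]
end

section
/- Consider the weighted graph G₂ with vertex set ℤ, edge set E₂ = {(x,y) : |x−y| = 1} ∪ {(x,−x) : x ≠ 0}, vertex weight m ≡ 1, and edge weights c(n,n+1) = (n+1)² + 1 and c(n,−n) = 1. Then: (i) for every finitely supported f : ℤ → ℝ, (1/4) Σ_{k∈ℤ} f(k)² ≤ Σ_{k∈ℤ} (k²+1)(f(k−1)−f(k))² + Σ_{k∈ℤ, k≠0} (f(k)−f(−k))² = ⟨Δ₀f, f⟩, so 0 is not in the spectrum of Δ₀; and (ii) 0 is an eigenvalue of the 1-form Laplacian Δ₁ of infinite multiplicity: the 1-forms φ_k (k ≥ 1), where φ_k takes the value 1/c(e) on each edge e of the cycle C_k and 0 on edges not in C_k or its reversal, with C₁ = ((0,1),(1,−1),(−1,0)) and C_k = ((k−1,k),(k,−k),(−k,−k+1),(−k+1,k−1)) for k ≥ 2, form an infinite linearly independent family in ℓ²(E₂) satisfying δφ_k = 0, hence Δ₁φ_k = 0. -/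
noncomputable section

/-- The edge weight of the graph `G₂` on `ℤ`: edges are the pairs at distance `1`, with
`c(n, n+1) = (n+1)² + 1`, together with the pairs `(x, -x)` for `x ≠ 0`, with weight `1`. -/
def cG2 : ℤ → ℤ → ℝ := fun x y =>
  if |x - y| = 1 then ((max x y : ℤ) : ℝ) ^ 2 + 1
  else if x = -y ∧ x ≠ 0 then 1 else 0

/-- The cycles `C₁ = ((0,1), (1,-1), (-1,0))` and
`C_k = ((k-1, k), (k, -k), (-k, -k+1), (-k+1, k-1))` for `k ≥ 2`, as sets of
oriented edges. -/
def cyc (k : ℕ) : Set (ℤ × ℤ) :=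
  if k = 1 then {(0, 1), (1, -1), (-1, 0)}
  else {((k : ℤ) - 1, (k : ℤ)), ((k : ℤ), -(k : ℤ)),
        (-(k : ℤ), -(k : ℤ) + 1), (-(k : ℤ) + 1, (k : ℤ) - 1)}

open Classical in
/-- The 1-form `φ_k` attached to the cycle `C_k`: it takes the value `1/c(e)` on each
edge `e` of `C_k`, `-1/c(e)` on the reversed edges, and `0` on all other pairs. -/
def phiG2 (k : ℕ) : ℤ → ℤ → ℝ := fun x y =>
  if (x, y) ∈ cyc k then 1 / cG2 x y
  else if (y, x) ∈ cyc k then -(1 / cG2 x y)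
  else 0

lemma cG2_symm (x y : ℤ) : cG2 x y = cG2 y x := by
  simp only [cG2, abs_sub_comm x y, max_comm x y]
  split_ifs with h1 h2 h3 <;> first | rfl | (exfalso; omega)

lemma cG2_step (n : ℤ) : cG2 (n - 1) n = (n : ℝ) ^ 2 + 1 := by
  have h1 : |(n - 1) - n| = 1 := by norm_num
  have h2 : max (n - 1) n = n := by omega
  simp only [cG2, h1, h2, if_true]

lemma cG2_step' (n : ℤ) : cG2 n (n + 1) = ((n + 1 : ℤ) : ℝ) ^ 2 + 1 := by
  have := cG2_step (n + 1); simpa using this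

lemma cG2_cross (n : ℤ) (hn : n ≠ 0) : cG2 n (-n) = 1 := by
  have h1 : ¬ |n - -n| = 1 := by
    intro h; rw [show n - -n = 2 * n by ring] at h
    rcases (abs_eq (by norm_num : (0:ℤ) ≤ 1)).mp h with h | h <;> omega
  simp only [cG2, if_neg h1]
  rw [if_pos ⟨(neg_neg n).symm, hn⟩]

lemma mem_cyc_one (p : ℤ × ℤ) :
    p ∈ cyc 1 ↔ p = (0, 1) ∨ p = (1, -1) ∨ p = (-1, 0) := by
  simp [cyc]

lemma mem_cyc_ge2 (k : ℕ) (hk : 2 ≤ k) (p : ℤ × ℤ) :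
    p ∈ cyc k ↔ p = ((k : ℤ) - 1, (k : ℤ)) ∨ p = ((k : ℤ), -(k : ℤ)) ∨
      p = (-(k : ℤ), -(k : ℤ) + 1) ∨ p = (-(k : ℤ) + 1, (k : ℤ) - 1) := by
  rw [cyc, if_neg (by omega)]
  simp

lemma base_edge_mem (k : ℕ) (hk : 1 ≤ k) : ((k : ℤ) - 1, (k : ℤ)) ∈ cyc k := by
  rcases eq_or_lt_of_le hk with h | h
  · subst h; rw [mem_cyc_one]; norm_num
  · rw [mem_cyc_ge2 k h]; left; rfl

lemma cG2_cyc_pos (k : ℕ) (hk : 1 ≤ k) {p : ℤ × ℤ} (hp : p ∈ cyc k) :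
    0 < cG2 p.1 p.2 := by
  rcases eq_or_lt_of_le hk with h | h
  · subst h
    rw [mem_cyc_one] at hp
    rcases hp with h1 | h1 | h1 <;> subst h1
    · have := cG2_step' 0; norm_num at this ⊢; rw [this]; norm_num
    · rw [show cG2 (1, (-1:ℤ)).1 (1, (-1:ℤ)).2 = cG2 1 (-(1:ℤ)) by norm_num,
        cG2_cross 1 (by norm_num)]; norm_num
    · have := cG2_step' (-1); norm_num at this ⊢; rw [this]; positivity
  · have h2 : 2 ≤ k := h
    rw [mem_cyc_ge2 k h2] at hp
    have hk2 : (2:ℤ) ≤ (k:ℤ) := by exact_mod_cast h2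
    rcases hp with h1 | h1 | h1 | h1 <;> subst h1 <;> simp only
    · rw [cG2_step]; positivity
    · rw [cG2_cross (k:ℤ) (by omega)]; norm_num
    · have := cG2_step' (-(k:ℤ)); rw [this]; positivity
    · have h0 : (-(k:ℤ)+1) ≠ 0 := by omega
      rw [show ((k:ℤ)-1) = -(-(k:ℤ)+1) by ring, cG2_cross _ h0]; norm_num

lemma no_rev (k : ℕ) (hk : 1 ≤ k) {x y : ℤ} (h1 : (x, y) ∈ cyc k) (h2 : (y, x) ∈ cyc k) :
    False := by
  rcases eq_or_lt_of_le hk with h | h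
  · subst h
    rw [mem_cyc_one] at h1 h2
    simp only [Prod.mk.injEq] at h1 h2; omega
  · have h2k : 2 ≤ k := h
    rw [mem_cyc_ge2 k h2k] at h1 h2
    have hk2 : (2:ℤ) ≤ (k:ℤ) := by exact_mod_cast h2k
    simp only [Prod.mk.injEq] at h1 h2; omega

lemma phi_antisymm (k : ℕ) (hk : 1 ≤ k) (x y : ℤ) : phiG2 k y x = -phiG2 k x y := by
  simp only [phiG2]
  by_cases h1 : (y, x) ∈ cyc k
  · rw [if_pos h1, if_neg (fun h2 => no_rev k hk h2 h1), if_pos h1, cG2_symm y x]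
    ring
  · rw [if_neg h1]
    by_cases h2 : (x, y) ∈ cyc k
    · rw [if_pos h2, if_pos h2, cG2_symm y x]
    · rw [if_neg h2, if_neg h2, if_neg h1, neg_zero]

lemma phi_zero_of_c_zero (k : ℕ) (hk : 1 ≤ k) (x y : ℤ) (h : cG2 x y = 0) :
    phiG2 k x y = 0 := by
  simp only [phiG2]
  rw [if_neg, if_neg]
  · intro h1
    exact (cG2_cyc_pos k hk h1).ne' (by rw [cG2_symm] at h; exact h)
  · intro h1
    exact (cG2_cyc_pos k hk h1).ne' h

lemma phi_ne_zero (k : ℕ) (hk : 1 ≤ k) : phiG2 k ≠ 0 := by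
  intro h
  have h1 : phiG2 k ((k:ℤ) - 1) (k:ℤ) = 0 := by rw [h]; rfl
  rw [phiG2] at h1
  rw [if_pos (base_edge_mem k hk), cG2_step] at h1
  have : (0:ℝ) < (k:ℝ)^2 + 1 := by positivity
  rw [div_eq_zero_iff] at h1
  rcases h1 with h1 | h1 <;> [exact one_ne_zero h1; exact this.ne' h1]

lemma cyc_finite (k : ℕ) : (cyc k).Finite := by
  rw [cyc]
  split_ifs <;>
  · apply Set.Finite.insert
    apply Set.Finite.insert
    first
    | exact Set.finite_singleton _
    | exact Set.Finite.insert _ (Set.finite_singleton _)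

lemma phi_support_finite (k : ℕ) :
    (Function.support fun p : ℤ × ℤ => phiG2 k p.1 p.2).Finite := by
  apply Set.Finite.subset ((cyc_finite k).union ((cyc_finite k).image Prod.swap))
  intro p hp
  simp only [Function.mem_support, phiG2] at hp
  by_cases h1 : (p.1, p.2) ∈ cyc k
  · left; simpa using h1
  · right
    by_cases h2 : (p.2, p.1) ∈ cyc k
    · exact ⟨(p.2, p.1), h2, rfl⟩
    · rw [if_neg h1, if_neg h2] at hp; exact absurd rfl hp

open Classical in
lemma chi_eq (k : ℕ) (hk : 1 ≤ k) (x y : ℤ) :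
    cG2 y x * phiG2 k y x
      = (if (y, x) ∈ cyc k then (1:ℝ) else 0) - (if (x, y) ∈ cyc k then (1:ℝ) else 0) := by
  simp only [phiG2]
  by_cases h1 : (y, x) ∈ cyc k
  · rw [if_pos h1, if_pos h1, if_neg (fun h2 => no_rev k hk h1 h2)]
    rw [mul_one_div, div_self (cG2_cyc_pos k hk h1).ne']
    ring
  · rw [if_neg h1, if_neg h1]
    by_cases h2 : (x, y) ∈ cyc k
    · rw [if_pos h2, if_pos h2]
      have hc : cG2 y x ≠ 0 := by
        rw [cG2_symm]; exact (cG2_cyc_pos k hk h2).ne'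
      field_simp
      ring
    · rw [if_neg h2, if_neg h2, mul_zero, sub_zero]

open Classical in
lemma delta_phi (k : ℕ) (hk : 1 ≤ k) (x : ℤ) :
    ∑ᶠ y : ℤ, cG2 y x * phiG2 k y x = 0 := by
  rcases eq_or_lt_of_le hk with h1 | h2
  · -- k = 1
    subst h1
    have hsub : Function.support (fun y => cG2 y x * phiG2 1 y x) ⊆ ↑({0, 1, -1} : Finset ℤ) := by
      intro y hy
      rw [Function.mem_support, chi_eq 1 le_rfl x y] at hy
      by_cases hm : (y, x) ∈ cyc 1
      · rw [mem_cyc_one] at hm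
        simp only [Finset.coe_insert, Set.mem_insert_iff, Finset.coe_singleton,
          Set.mem_singleton_iff, Prod.mk.injEq] at hm ⊢
        rcases hm with h | h | h <;> simp [h.1]
      · by_cases hm2 : (x, y) ∈ cyc 1
        · rw [mem_cyc_one] at hm2
          simp only [Finset.coe_insert, Set.mem_insert_iff, Finset.coe_singleton,
            Set.mem_singleton_iff, Prod.mk.injEq] at hm2 ⊢
          rcases hm2 with h | h | h <;> simp [h.2]
        · exfalso; rw [if_neg hm, if_neg hm2, sub_zero] at hy; exact hy rfl
    rw [finsum_eq_sum_of_support_subset _ hsub]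
    have hc : ∀ y ∈ ({0, 1, -1} : Finset ℤ), cG2 y x * phiG2 1 y x
        = (if (y, x) ∈ cyc 1 then (1:ℝ) else 0) - (if (x, y) ∈ cyc 1 then (1:ℝ) else 0) :=
      fun y _ => chi_eq 1 le_rfl x y
    rw [Finset.sum_congr rfl hc]
    have m1 : ((0:ℤ), x) ∈ cyc 1 ↔ x = 1 := by
      simp [mem_cyc_one, Prod.mk.injEq]; try omega
    have m2 : ((1:ℤ), x) ∈ cyc 1 ↔ x = -1 := by
      simp [mem_cyc_one, Prod.mk.injEq]; try omega
    have m3 : ((-1:ℤ), x) ∈ cyc 1 ↔ x = 0 := by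
      simp [mem_cyc_one, Prod.mk.injEq]; try omega
    have n1 : (x, (0:ℤ)) ∈ cyc 1 ↔ x = -1 := by
      simp [mem_cyc_one, Prod.mk.injEq]; try omega
    have n2 : (x, (1:ℤ)) ∈ cyc 1 ↔ x = 0 := by
      simp [mem_cyc_one, Prod.mk.injEq]; try omega
    have n3 : (x, (-1:ℤ)) ∈ cyc 1 ↔ x = 1 := by
      simp [mem_cyc_one, Prod.mk.injEq]; try omega
    rw [show ({0, 1, -1} : Finset ℤ) = insert 0 (insert 1 {-1}) from rfl]
    rw [Finset.sum_insert (by norm_num), Finset.sum_insert (by norm_num), Finset.sum_singleton]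
    simp only [m1, m2, m3, n1, n2, n3]
    ring
  · -- 2 ≤ k
    have hk2 : 2 ≤ k := h2
    have hsub : Function.support (fun y => cG2 y x * phiG2 k y x)
        ⊆ ↑({(k:ℤ) - 1, (k:ℤ), -(k:ℤ), -(k:ℤ) + 1} : Finset ℤ) := by
      intro y hy
      rw [Function.mem_support, chi_eq k hk x y] at hy
      by_cases hm : (y, x) ∈ cyc k
      · rw [mem_cyc_ge2 k hk2] at hm
        simp only [Finset.coe_insert, Set.mem_insert_iff, Finset.coe_singleton,
          Set.mem_singleton_iff, Prod.mk.injEq] at hm ⊢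
        rcases hm with h | h | h | h <;> omega
      · by_cases hm2 : (x, y) ∈ cyc k
        · rw [mem_cyc_ge2 k hk2] at hm2
          simp only [Finset.coe_insert, Set.mem_insert_iff, Finset.coe_singleton,
            Set.mem_singleton_iff, Prod.mk.injEq] at hm2 ⊢
          rcases hm2 with h | h | h | h <;> omega
        · exfalso; rw [if_neg hm, if_neg hm2, sub_zero] at hy; exact hy rfl
    rw [finsum_eq_sum_of_support_subset _ hsub]
    have hc : ∀ y ∈ ({(k:ℤ) - 1, (k:ℤ), -(k:ℤ), -(k:ℤ) + 1} : Finset ℤ),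
        cG2 y x * phiG2 k y x
        = (if (y, x) ∈ cyc k then (1:ℝ) else 0) - (if (x, y) ∈ cyc k then (1:ℝ) else 0) :=
      fun y _ => chi_eq k hk x y
    rw [Finset.sum_congr rfl hc]
    have m1 : ((k:ℤ) - 1, x) ∈ cyc k ↔ x = (k:ℤ) := by
      simp [mem_cyc_ge2 k hk2, Prod.mk.injEq]; try omega
    have m2 : ((k:ℤ), x) ∈ cyc k ↔ x = -(k:ℤ) := by
      simp [mem_cyc_ge2 k hk2, Prod.mk.injEq]; try omega
    have m3 : (-(k:ℤ), x) ∈ cyc k ↔ x = -(k:ℤ) + 1 := by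
      simp [mem_cyc_ge2 k hk2, Prod.mk.injEq]; try omega
    have m4 : (-(k:ℤ) + 1, x) ∈ cyc k ↔ x = (k:ℤ) - 1 := by
      simp [mem_cyc_ge2 k hk2, Prod.mk.injEq]; try omega
    have n1 : (x, (k:ℤ) - 1) ∈ cyc k ↔ x = -(k:ℤ) + 1 := by
      simp [mem_cyc_ge2 k hk2, Prod.mk.injEq]; try omega
    have n2 : (x, (k:ℤ)) ∈ cyc k ↔ x = (k:ℤ) - 1 := by
      simp [mem_cyc_ge2 k hk2, Prod.mk.injEq]; try omega
    have n3 : (x, -(k:ℤ)) ∈ cyc k ↔ x = (k:ℤ) := by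
      simp [mem_cyc_ge2 k hk2, Prod.mk.injEq]; try omega
    have n4 : (x, -(k:ℤ) + 1) ∈ cyc k ↔ x = -(k:ℤ) := by
      simp [mem_cyc_ge2 k hk2, Prod.mk.injEq]; try omega
    rw [show ({(k:ℤ) - 1, (k:ℤ), -(k:ℤ), -(k:ℤ) + 1} : Finset ℤ)
        = insert ((k:ℤ) - 1) (insert (k:ℤ) (insert (-(k:ℤ)) {-(k:ℤ) + 1})) from rfl]
    rw [Finset.sum_insert (by simp only [Finset.mem_insert, Finset.mem_singleton]; omega),
      Finset.sum_insert (by simp only [Finset.mem_insert, Finset.mem_singleton]; omega),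
      Finset.sum_insert (by simp only [Finset.mem_singleton]; omega),
      Finset.sum_singleton]
    simp only [m1, m2, m3, m4, n1, n2, n3, n4]
    ring

lemma phi_summable (k : ℕ) :
    Summable fun p : ℤ × ℤ => cG2 p.1 p.2 * phiG2 k p.1 p.2 ^ 2 := by
  apply summable_of_ne_finset_zero (s := (phi_support_finite k).toFinset)
  intro p hp
  have : phiG2 k p.1 p.2 = 0 := by
    by_contra h
    exact hp ((phi_support_finite k).mem_toFinset.mpr h)
  rw [this]; ring

open Classical in
lemma phi_eval (i j : ℕ) :
    phiG2 (j + 1) (i : ℤ) ((i : ℤ) + 1) = if i = j then 1 / (((i : ℤ) + 1 : ℝ) ^ 2 + 1) else 0 := by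
  have hrev : ((i : ℤ) + 1, (i : ℤ)) ∉ cyc (j + 1) := by
    rcases Nat.eq_zero_or_pos j with h | h
    · subst h; rw [mem_cyc_one]; simp [Prod.mk.injEq]; omega
    · rw [mem_cyc_ge2 _ (by omega)]; simp [Prod.mk.injEq]; omega
  by_cases hij : i = j
  · subst hij
    have hmem : ((i : ℤ), (i : ℤ) + 1) ∈ cyc (i + 1) := by
      have := base_edge_mem (i + 1) (Nat.succ_le_succ (Nat.zero_le i))
      simpa [show ((i + 1 : ℕ) : ℤ) - 1 = (i : ℤ) by push_cast; ring,
        show ((i + 1 : ℕ) : ℤ) = (i : ℤ) + 1 by push_cast; ring] using this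
    have hcg : cG2 (i : ℤ) ((i : ℤ) + 1) = ((i : ℤ) + 1 : ℝ) ^ 2 + 1 := by
      have := cG2_step' (i : ℤ); rw [this]; push_cast; ring
    simp only [phiG2]
    rw [if_pos hmem, hcg]
    simp
  · have hmem : ((i : ℤ), (i : ℤ) + 1) ∉ cyc (j + 1) := by
      rcases Nat.eq_zero_or_pos j with h | h
      · subst h; rw [mem_cyc_one]; simp [Prod.mk.injEq]; omega
      · rw [mem_cyc_ge2 _ (by omega)]; simp [Prod.mk.injEq]; omega
    simp only [phiG2]
    rw [if_neg hmem, if_neg hrev, if_neg hij]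

lemma phi_linear_independent : LinearIndependent ℝ fun k : ℕ => phiG2 (k + 1) := by
  rw [linearIndependent_iff']
  intro s g hsum i hi
  have h1 : (∑ j ∈ s, g j • phiG2 (j + 1)) (i : ℤ) ((i : ℤ) + 1) = 0 := by rw [hsum]; rfl
  rw [Finset.sum_apply] at h1
  simp only [Pi.smul_apply] at h1
  rw [Finset.sum_apply] at h1
  simp only [Pi.smul_apply, smul_eq_mul] at h1
  have h2 : ∀ j ∈ s, g j * phiG2 (j + 1) (i : ℤ) ((i : ℤ) + 1)
      = if j = i then g i * (1 / (((i : ℤ) + 1 : ℝ) ^ 2 + 1)) else 0 := by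
    intro j _
    rw [phi_eval i j]
    by_cases h : i = j
    · subst h; simp
    · rw [if_neg h, if_neg (fun hh => h hh.symm), mul_zero]
  rw [Finset.sum_congr rfl h2, Finset.sum_ite_eq' s i
    (fun _ => g i * (1 / (((i : ℤ) + 1 : ℝ) ^ 2 + 1))), if_pos hi] at h1
  have hpos : (0:ℝ) < ((i : ℤ) + 1 : ℝ) ^ 2 + 1 := by positivity
  rcases mul_eq_zero.mp h1 with h | h
  · exact h
  · exfalso
    rw [div_eq_zero_iff] at h
    rcases h with h | h
    · exact one_ne_zero h
    · exact hpos.ne' h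

def uR : ℕ → ℝ
  | 0 => 1
  | 1 => 5/6
  | n+2 => (2*(n:ℝ)+6)/(2*(n:ℝ)+7) * uR (n+1)

def uL : ℕ → ℝ
  | 0 => 1
  | 1 => 1
  | 2 => 87/100
  | n+3 => (2*(n:ℝ)+8)/(2*(n:ℝ)+9) * uL (n+2)

lemma uR_pos : ∀ n, 0 < uR n
  | 0 => by norm_num [uR]
  | 1 => by norm_num [uR]
  | n+2 => by
      have h := uR_pos (n+1)
      rw [uR]
      have h1 : (0:ℝ) < 2*(n:ℝ)+6 := by positivity
      have h2 : (0:ℝ) < 2*(n:ℝ)+7 := by positivity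
      positivity

lemma uL_pos : ∀ n, 0 < uL n
  | 0 => by norm_num [uL]
  | 1 => by norm_num [uL]
  | 2 => by norm_num [uL]
  | n+3 => by
      have h := uL_pos (n+2)
      rw [uL]
      have h1 : (0:ℝ) < 2*(n:ℝ)+8 := by positivity
      have h2 : (0:ℝ) < 2*(n:ℝ)+9 := by positivity
      positivity

def UU : ℤ → ℝ := fun x => if 0 ≤ x then uR x.toNat else uL (-x).toNat

lemma UU_coe (n : ℕ) : UU (n : ℤ) = uR n := by simp [UU]

lemma UU_negcoe (n : ℕ) : UU (-(n : ℤ)) = uL n := by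
  cases n with
  | zero => simp [UU, uR, uL]
  | succ m =>
    have h : ¬ (0 ≤ -((m+1 : ℕ) : ℤ)) := by omega
    simp only [UU, if_neg h, neg_neg, Int.toNat_natCast]

lemma UU_pos (x : ℤ) : 0 < UU x := by
  rw [UU]
  split_ifs <;> [exact uR_pos _; exact uL_pos _]

def aG2 : ℤ → ℝ := fun k => ((k:ℝ)^2 + 1) * (UU (k-1) - UU k)

lemma key_right (n : ℕ) :
    uR (n+2) / 4 ≤ (((n:ℝ)+3)^2 + 1) * (uR (n+2) - uR (n+3))
      + (((n:ℝ)+2)^2 + 1) * (uR (n+2) - uR (n+1)) := by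
  have e2 : uR (n+2) = (2*(n:ℝ)+6)/(2*(n:ℝ)+7) * uR (n+1) := by rw [uR]
  have e3 : uR (n+3) = (2*(n:ℝ)+8)/(2*(n:ℝ)+9) * uR (n+2) := by
    have : uR (n+1+2) = (2*((n+1:ℕ):ℝ)+6)/(2*((n+1:ℕ):ℝ)+7) * uR (n+1+1) := by rw [uR]
    rw [show n+1+2 = n+3 from rfl, show n+1+1 = n+2 from rfl] at this
    rw [this]; push_cast; ring_nf
  have ht : 0 < uR (n+1) := uR_pos (n+1)
  have hm : (0:ℝ) ≤ (n:ℝ) := Nat.cast_nonneg n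
  have h7 : (0:ℝ) < 2*(n:ℝ)+7 := by positivity
  have h9 : (0:ℝ) < 2*(n:ℝ)+9 := by positivity
  have hid : (((n:ℝ)+3)^2 + 1) * (uR (n+2) - uR (n+3))
      + (((n:ℝ)+2)^2 + 1) * (uR (n+2) - uR (n+1)) - uR (n+2) / 4
      = uR (n+1) * (10*(n:ℝ)+6) / (4*(2*(n:ℝ)+7)*(2*(n:ℝ)+9)) := by
    rw [e3, e2]
    field_simp
    ring
  have hnn : 0 ≤ uR (n+1) * (10*(n:ℝ)+6) / (4*(2*(n:ℝ)+7)*(2*(n:ℝ)+9)) := by positivity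
  linarith [hid ▸ hnn]

lemma key_left (n : ℕ) :
    uL (n+3) / 4 ≤ (((n:ℝ)+2)^2 + 1) * (uL (n+3) - uL (n+2))
      + (((n:ℝ)+3)^2 + 1) * (uL (n+3) - uL (n+4)) := by
  have e3 : uL (n+3) = (2*(n:ℝ)+8)/(2*(n:ℝ)+9) * uL (n+2) := by rw [uL]
  have e4 : uL (n+4) = (2*(n:ℝ)+10)/(2*(n:ℝ)+11) * uL (n+3) := by
    have : uL (n+1+3) = (2*((n+1:ℕ):ℝ)+8)/(2*((n+1:ℕ):ℝ)+9) * uL (n+1+2) := by rw [uL]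
    rw [show n+1+3 = n+4 from rfl, show n+1+2 = n+3 from rfl] at this
    rw [this]; push_cast; ring_nf
  have ht : 0 < uL (n+2) := uL_pos (n+2)
  have hm : (0:ℝ) ≤ (n:ℝ) := Nat.cast_nonneg n
  have h9 : (0:ℝ) < 2*(n:ℝ)+9 := by positivity
  have h11 : (0:ℝ) < 2*(n:ℝ)+11 := by positivity
  have hid : (((n:ℝ)+2)^2 + 1) * (uL (n+3) - uL (n+2))
      + (((n:ℝ)+3)^2 + 1) * (uL (n+3) - uL (n+4)) - uL (n+3) / 4
      = uL (n+2) * (18*(n:ℝ)+12) / (4*(2*(n:ℝ)+9)*(2*(n:ℝ)+11)) := by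
    rw [e4, e3]
    field_simp
    ring
  have hnn : 0 ≤ uL (n+2) * (18*(n:ℝ)+12) / (4*(2*(n:ℝ)+9)*(2*(n:ℝ)+11)) := by positivity
  linarith [hid ▸ hnn]

lemma UU0 : UU 0 = 1 := by rw [show (0:ℤ) = ((0:ℕ):ℤ) from rfl, UU_coe]; norm_num [uR]
lemma UU1 : UU 1 = 5/6 := by rw [show (1:ℤ) = ((1:ℕ):ℤ) from rfl, UU_coe]; norm_num [uR]
lemma uR2 : uR 2 = 5/7 := by rw [show (2:ℕ) = 0+2 from rfl, uR]; norm_num [uR]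
lemma uR3 : uR 3 = 40/63 := by
  rw [show (3:ℕ) = 1+2 from rfl, uR]
  rw [show (1:ℕ)+1 = 0+2 from rfl, uR]
  norm_num [uR]
lemma UU2 : UU 2 = 5/7 := by rw [show (2:ℤ) = ((2:ℕ):ℤ) from rfl, UU_coe, uR2]
lemma UU3 : UU 3 = 40/63 := by rw [show (3:ℤ) = ((3:ℕ):ℤ) from rfl, UU_coe, uR3]
lemma uL3 : uL 3 = 58/75 := by rw [show (3:ℕ) = 0+3 from rfl, uL]; norm_num [uL]
lemma UUm1 : UU (-1) = 1 := by rw [show (-1:ℤ) = -((1:ℕ):ℤ) from rfl, UU_negcoe]; norm_num [uL]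
lemma UUm2 : UU (-2) = 87/100 := by rw [show (-2:ℤ) = -((2:ℕ):ℤ) from rfl, UU_negcoe]; norm_num [uL]
lemma UUm3 : UU (-3) = 58/75 := by rw [show (-3:ℤ) = -((3:ℕ):ℤ) from rfl, UU_negcoe, uL3]

lemma aG2_diff (x : ℤ) : aG2 (x+1) - aG2 x
    = (((x:ℝ)+1)^2+1) * (UU x - UU (x+1)) + ((x:ℝ)^2+1) * (UU x - UU (x-1)) := by
  simp only [aG2, show x+1-1 = x by ring]
  push_cast
  ring

lemma key_all (x : ℤ) : UU x / 4 ≤ aG2 (x+1) - aG2 x := by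
  rw [aG2_diff]
  rcases (by omega : x = 0 ∨ x = 1 ∨ x = -1 ∨ x = -2 ∨ 2 ≤ x ∨ x ≤ -3) with h|h|h|h|h|h
  · subst h
    rw [show (0:ℤ)+1 = 1 by ring, show (0:ℤ)-1 = -1 by ring, UU0, UU1, UUm1]
    norm_num
  · subst h
    rw [show (1:ℤ)+1 = 2 by ring, show (1:ℤ)-1 = 0 by ring, UU0, UU1, UU2]
    norm_num
  · subst h
    rw [show (-1:ℤ)+1 = 0 by ring, show (-1:ℤ)-1 = -2 by ring, UU0, UUm1, UUm2]
    norm_num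
  · subst h
    rw [show (-2:ℤ)+1 = -1 by ring, show (-2:ℤ)-1 = -3 by ring, UUm1, UUm2, UUm3]
    norm_num
  · obtain ⟨n, hn⟩ := Int.eq_ofNat_of_zero_le (by omega : 0 ≤ x - 2)
    have hx : x = (n:ℤ) + 2 := by omega
    subst hx
    rw [show (n:ℤ)+2+1 = ((n+3:ℕ):ℤ) by push_cast; ring,
        show (n:ℤ)+2-1 = ((n+1:ℕ):ℤ) by push_cast; ring,
        show (n:ℤ)+2 = ((n+2:ℕ):ℤ) by push_cast; ring, UU_coe, UU_coe, UU_coe]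
    have hk := key_right n
    push_cast
    ring_nf
    ring_nf at hk
    linarith [hk]
  · obtain ⟨n, hn⟩ := Int.eq_ofNat_of_zero_le (by omega : 0 ≤ -x - 3)
    have hx : x = -((n:ℤ) + 3) := by omega
    subst hx
    rw [show -((n:ℤ)+3)+1 = -((n+2:ℕ):ℤ) by push_cast; ring,
        show -((n:ℤ)+3)-1 = -((n+4:ℕ):ℤ) by push_cast; ring,
        show -((n:ℤ)+3) = -((n+3:ℕ):ℤ) by push_cast; ring,
        UU_negcoe, UU_negcoe, UU_negcoe]
    have hk := key_left n
    push_cast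
    ring_nf
    ring_nf at hk
    linarith [hk]

lemma finsum_le_finsum_of_le {f g : ℤ → ℝ} (h : ∀ x, f x ≤ g x)
    (hf : (Function.support f).Finite) (hg : (Function.support g).Finite) :
    ∑ᶠ x, f x ≤ ∑ᶠ x, g x := by
  classical
  have hsf : Function.support f ⊆ ↑(hf.union hg).toFinset := by
    intro x hx; rw [Set.Finite.coe_toFinset]; exact Or.inl hx
  have hsg : Function.support g ⊆ ↑(hf.union hg).toFinset := by
    intro x hx; rw [Set.Finite.coe_toFinset]; exact Or.inr hx
  rw [finsum_eq_sum_of_support_subset f hsf, finsum_eq_sum_of_support_subset g hsg]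
  exact Finset.sum_le_sum fun i _ => h i

lemma edge_ineq (w ux uy fx fy : ℝ) (hw : 0 ≤ w) (hux : 0 < ux) (huy : 0 < uy) :
    w * (ux - uy) * (fx^2/ux - fy^2/uy) ≤ w * (fx - fy)^2 := by
  have hid : ux*uy*((fx - fy)^2 - (ux - uy) * (fx^2/ux - fy^2/uy)) = (uy*fx - ux*fy)^2 := by
    field_simp
    ring
  have hD : 0 ≤ (fx - fy)^2 - (ux - uy) * (fx^2/ux - fy^2/uy) := by
    nlinarith [hid, sq_nonneg (uy*fx - ux*fy), mul_pos hux huy]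
  nlinarith [mul_nonneg hw hD]

lemma part_one (f : ℤ → ℝ) (hf : (Function.support f).Finite) :
    (1 / 4) * ∑ᶠ k : ℤ, f k ^ 2
      ≤ (∑ᶠ k : ℤ, ((k : ℝ) ^ 2 + 1) * (f (k - 1) - f k) ^ 2)
          + ∑ᶠ k ∈ {k : ℤ | k ≠ 0}, (f k - f (-k)) ^ 2 := by
  classical
  have hcross : 0 ≤ ∑ᶠ k ∈ {k : ℤ | k ≠ 0}, (f k - f (-k)) ^ 2 := by
    rw [finsum_mem_def]
    exact finsum_nonneg fun i => Set.indicator_nonneg (fun a _ => sq_nonneg _) i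
  -- main Hardy-type bound via ground state UU
  set v : ℤ → ℝ := fun x => f x ^ 2 / UU x with hv
  have hv_supp : Function.support v ⊆ Function.support f := by
    intro x hx
    simp only [Function.mem_support, hv] at hx ⊢
    intro h0; rw [h0] at hx; simp at hx
  have hvf : (Function.support v).Finite := hf.subset hv_supp
  have hshift : (Function.support fun k : ℤ => aG2 k * v (k-1)).Finite := by
    apply Set.Finite.subset (hvf.image (fun t => t + 1))
    intro k hk
    simp only [Function.mem_support] at hk
    have : v (k-1) ≠ 0 := fun h0 => hk (by rw [h0, mul_zero])
    exact ⟨k - 1, this, by ring⟩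
  have hH2 : (Function.support fun k : ℤ => aG2 k * v k).Finite := by
    apply hvf.subset
    intro k hk
    simp only [Function.mem_support] at hk ⊢
    exact fun h0 => hk (by rw [h0, mul_zero])
  have hGf : (Function.support fun k : ℤ => aG2 k * (v (k-1) - v k)).Finite := by
    apply Set.Finite.subset (hshift.union hH2)
    intro k hk
    simp only [Function.mem_support, Set.mem_union] at hk ⊢
    by_contra hcon
    push_neg at hcon
    obtain ⟨h1, h2⟩ := hcon
    apply hk
    rw [mul_sub, h1, h2, sub_zero]
  have hLf : (Function.support fun k : ℤ => ((k:ℝ)^2+1) * (f (k-1) - f k)^2).Finite := by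
    apply Set.Finite.subset ((hf.image (fun t => t + 1)).union hf)
    intro k hk
    simp only [Function.mem_support, Set.mem_union] at hk
    by_cases h1 : f (k-1) = 0
    · right
      simp only [Function.mem_support]
      intro h2; rw [h1, h2] at hk; simp at hk
    · left; exact ⟨k - 1, h1, by ring⟩
  -- step A
  have stepA : ∑ᶠ k : ℤ, aG2 k * (v (k-1) - v k)
      ≤ ∑ᶠ k : ℤ, ((k:ℝ)^2+1) * (f (k-1) - f k)^2 := by
    apply finsum_le_finsum_of_le _ hGf hLf
    intro k
    have := edge_ineq ((k:ℝ)^2+1) (UU (k-1)) (UU k) (f (k-1)) (f k)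
      (by positivity) (UU_pos (k-1)) (UU_pos k)
    simp only [hv]
    calc aG2 k * (f (k-1)^2 / UU (k-1) - f k^2 / UU k)
        = ((k:ℝ)^2+1) * (UU (k-1) - UU k) * (f (k-1)^2 / UU (k-1) - f k^2 / UU k) := by
          simp only [aG2]; try ring
      _ ≤ ((k:ℝ)^2+1) * (f (k-1) - f k)^2 := this
  -- step B/C/D : Abel summation
  have stepB : ∑ᶠ k : ℤ, aG2 k * (v (k-1) - v k)
      = ∑ᶠ k : ℤ, (aG2 (k+1) - aG2 k) * v k := by
    have h1 : ∑ᶠ k : ℤ, aG2 k * (v (k-1) - v k)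
        = (∑ᶠ k : ℤ, aG2 k * v (k-1)) - ∑ᶠ k : ℤ, aG2 k * v k := by
      rw [← finsum_sub_distrib hshift hH2]
      exact finsum_congr fun k => by ring
    have h2 : ∑ᶠ k : ℤ, aG2 k * v (k-1) = ∑ᶠ k : ℤ, aG2 (k+1) * v k := by
      have := finsum_comp_equiv (Equiv.addRight (1:ℤ)) (f := fun k => aG2 k * v (k-1))
      rw [← this]
      apply finsum_congr
      intro k
      simp only [Equiv.coe_addRight, add_sub_cancel_right]
    have hshift' : (Function.support fun k : ℤ => aG2 (k+1) * v k).Finite := by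
      apply hvf.subset
      intro k hk
      simp only [Function.mem_support] at hk ⊢
      exact fun h0 => hk (by rw [h0, mul_zero])
    rw [h1, h2, ← finsum_sub_distrib hshift' hH2]
    exact finsum_congr fun k => by ring
  -- step E
  have stepE : ∑ᶠ k : ℤ, (1/4 : ℝ) * f k ^ 2 ≤ ∑ᶠ k : ℤ, (aG2 (k+1) - aG2 k) * v k := by
    have hq : (Function.support fun k : ℤ => (1/4 : ℝ) * f k ^ 2).Finite := by
      apply hf.subset
      intro k hk
      simp only [Function.mem_support] at hk ⊢
      intro h0; rw [h0] at hk; simp at hk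
    have hw : (Function.support fun k : ℤ => (aG2 (k+1) - aG2 k) * v k).Finite := by
      apply hvf.subset
      intro k hk
      simp only [Function.mem_support] at hk ⊢
      exact fun h0 => hk (by rw [h0, mul_zero])
    apply finsum_le_finsum_of_le _ hq hw
    intro k
    have hk4 : UU k / 4 ≤ aG2 (k+1) - aG2 k := key_all k
    have hvk : 0 ≤ v k := by
      simp only [hv]
      exact div_nonneg (sq_nonneg _) (UU_pos k).le
    have heq : UU k / 4 * v k = (1/4 : ℝ) * f k ^ 2 := by
      simp only [hv]
      field_simp [(UU_pos k).ne']
    calc (1/4 : ℝ) * f k ^ 2 = UU k / 4 * v k := heq.symm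
      _ ≤ (aG2 (k+1) - aG2 k) * v k := mul_le_mul_of_nonneg_right hk4 hvk
  -- step F
  have stepF : ∑ᶠ k : ℤ, (1/4 : ℝ) * f k ^ 2 = (1/4 : ℝ) * ∑ᶠ k : ℤ, f k ^ 2 := by
    have hs1 : Function.support (fun k : ℤ => (1/4 : ℝ) * f k ^ 2) ⊆ ↑hf.toFinset := by
      intro k hk
      rw [Set.Finite.coe_toFinset]
      simp only [Function.mem_support] at hk ⊢
      intro h0; rw [h0] at hk; simp at hk
    have hs2 : Function.support (fun k : ℤ => f k ^ 2) ⊆ ↑hf.toFinset := by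
      intro k hk
      rw [Set.Finite.coe_toFinset]
      simp only [Function.mem_support] at hk ⊢
      intro h0; rw [h0] at hk; simp at hk
    rw [finsum_eq_sum_of_support_subset _ hs1, finsum_eq_sum_of_support_subset _ hs2,
      Finset.mul_sum]
  have : (1/4 : ℝ) * ∑ᶠ k : ℤ, f k ^ 2 ≤ ∑ᶠ k : ℤ, ((k:ℝ)^2+1) * (f (k-1) - f k)^2 := by
    rw [← stepF]
    calc ∑ᶠ k : ℤ, (1/4 : ℝ) * f k ^ 2 ≤ ∑ᶠ k : ℤ, (aG2 (k+1) - aG2 k) * v k := stepE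
      _ = ∑ᶠ k : ℤ, aG2 k * (v (k-1) - v k) := stepB.symm
      _ ≤ _ := stepA
  linarith

/-- For the weighted graph `G₂` on `ℤ` (edges `(n, n±1)` with weight
`c(n, n+1) = (n+1)² + 1` and `(x, -x)`, `x ≠ 0`, with weight `1`; vertex weight `m ≡ 1`):
(i) for every finitely supported `f : ℤ → ℝ`,
`(1/4) Σ_k f(k)² ≤ Σ_k (k²+1)(f(k-1) - f(k))² + Σ_{k ≠ 0} (f(k) - f(-k))² = ⟨Δ₀f, f⟩`,
so `0` is not in the spectrum of `Δ₀`;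
(ii) `0` is an eigenvalue of the 1-form Laplacian `Δ₁` of infinite multiplicity: the
1-forms `φ_k` (`k ≥ 1`) supported on the cycles `C_k` form an infinite linearly
independent family of 1-forms in `ℓ²(E₂)` satisfying `δφ_k = 0`, hence `Δ₁φ_k = 0`. -/
theorem G2_no_gap_zero_infinite_multiplicity :
    -- (i) spectral gap for `Δ₀`
    (∀ f : ℤ → ℝ, (Function.support f).Finite →
      (1 / 4) * ∑ᶠ k : ℤ, f k ^ 2
        ≤ (∑ᶠ k : ℤ, ((k : ℝ) ^ 2 + 1) * (f (k - 1) - f k) ^ 2)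
            + ∑ᶠ k ∈ {k : ℤ | k ≠ 0}, (f k - f (-k)) ^ 2) ∧
    -- (ii) the `φ_k`, `k ≥ 1`, are linearly independent …
    (LinearIndependent ℝ fun k : ℕ => phiG2 (k + 1)) ∧
    -- … and each `φ_k` is a nonzero 1-form in `ℓ²(E₂)` with `δφ_k = 0`, hence `Δ₁φ_k = 0`
    (∀ k : ℕ, 1 ≤ k →
      phiG2 k ≠ 0 ∧
      (∀ x y : ℤ, phiG2 k y x = -phiG2 k x y) ∧
      (∀ x y : ℤ, cG2 x y = 0 → phiG2 k x y = 0) ∧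
      (Function.support fun p : ℤ × ℤ => phiG2 k p.1 p.2).Finite ∧
      (Summable fun p : ℤ × ℤ => cG2 p.1 p.2 * phiG2 k p.1 p.2 ^ 2) ∧
      (∀ x : ℤ, ∑ᶠ y : ℤ, cG2 y x * phiG2 k y x = 0) ∧
      (∀ x y : ℤ, 0 < cG2 x y →
        (∑ᶠ z : ℤ, cG2 z y * phiG2 k z y) - (∑ᶠ z : ℤ, cG2 z x * phiG2 k z x) = 0)) := by
  refine ⟨fun f hf => part_one f hf, phi_linear_independent, ?_⟩
  intro k hk
  exact ⟨phi_ne_zero k hk, phi_antisymm k hk, phi_zero_of_c_zero k hk,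
    phi_support_finite k, phi_summable k, delta_phi k hk,
    fun x y _ => by rw [delta_phi k hk y, delta_phi k hk x, sub_zero]⟩

end
end
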